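/- arXiv:0804.3302 — 4 statements merged into one kernel-verified Lean document; each statement's English description precedes it below -/
import Mathlib

section
/- Let f be an entire function on ℂ^p with |f(z)| ≤ C₀ e^{σ|z|}, whose restriction to ℝ^p has finite Besicovitch norm ‖f‖_B. Then for every s₀ > 0 there exists T(s₀) such that for all T ≥ T(s₀) and all s ∈ (0, s₀), ∫_{[-T,T]^p} |f(x₁ + is, x₂, …, x_p)| e^{-sσ} dx ≤ C₈ T^p, where C₈ = 2^{p+1}(1 + 2·3^p ‖f‖_B). -/
open MeasureTheory Filter

noncomputable section

def cube (p : ℕ) (T : ℝ) : Set (EuclideanSpace ℝ (Fin p)) :=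
  {x | ∀ i, x i ∈ Set.Icc (-T) T}

def BNorm (p : ℕ) (f : EuclideanSpace ℝ (Fin p) → ℂ) : ℝ :=
  Filter.limsup (fun T : ℝ => (2*T)^(-(p:ℤ)) * ∫ x in cube p T, ‖f x‖) Filter.atTop

def BNormFinite (p : ℕ) (f : EuclideanSpace ℝ (Fin p) → ℂ) : Prop :=
  Filter.IsBoundedUnder (· ≤ ·) Filter.atTop
    (fun T : ℝ => (2*T)^(-(p:ℤ)) * ∫ x in cube p T, ‖f x‖)

def toC (p : ℕ) (x : EuclideanSpace ℝ (Fin p)) : EuclideanSpace ℂ (Fin p) :=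
  WithLp.toLp 2 (fun i => (x i : ℂ))

/-- The point (x₁ + is, x₂, …, x_p) ∈ ℂ^p obtained from real x by shifting the first
coordinate by is. -/
def shiftFirst (p : ℕ) (hp : 0 < p) (s : ℝ) (x : EuclideanSpace ℝ (Fin p)) :
    EuclideanSpace ℂ (Fin p) :=
  WithLp.toLp 2 (fun i => if i = (⟨0, hp⟩ : Fin p) then (x i : ℂ) + Complex.I * s else (x i : ℂ))

set_option maxHeartbeats 1000000

open Set Filter MeasureTheory

section helpers

variable {p : ℕ}

lemma toC_norm (x : EuclideanSpace ℝ (Fin p)) : ‖toC p x‖ = ‖x‖ := by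
  rw [EuclideanSpace.norm_eq, EuclideanSpace.norm_eq]
  congr 1
  refine Finset.sum_congr rfl fun i _ => ?_
  have : (toC p x) i = ((x i : ℝ) : ℂ) := rfl
  rw [this, Complex.norm_real]

lemma toC_continuous : Continuous (toC p) := by
  refine (PiLp.continuous_toLp 2 _).comp (continuous_pi fun i => ?_)
  exact Complex.continuous_ofReal.comp ((continuous_apply i).comp (PiLp.continuous_ofLp 2 _))

lemma isClosed_cube (T : ℝ) : IsClosed (cube p T) := by
  have : cube p T = ⋂ i, (fun x : EuclideanSpace ℝ (Fin p) => x i) ⁻¹' Set.Icc (-T) T := by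
    ext x; simp [cube, Set.mem_iInter]
  rw [this]
  exact isClosed_iInter fun i => isClosed_Icc.preimage ((continuous_apply i).comp (PiLp.continuous_ofLp 2 _))

lemma norm_le_of_mem_cube {T : ℝ} {x : EuclideanSpace ℝ (Fin p)} (hx : x ∈ cube p T) :
    ‖x‖ ≤ Real.sqrt (p * T ^ 2) := by
  rw [EuclideanSpace.norm_eq]
  apply Real.sqrt_le_sqrt
  have h1 : ∀ i, ‖x i‖ ^ 2 ≤ T ^ 2 := by
    intro i
    rw [Real.norm_eq_abs, sq_abs]
    exact sq_le_sq' (hx i).1 (hx i).2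
  calc ∑ i, ‖x i‖ ^ 2 ≤ ∑ _i : Fin p, T ^ 2 := Finset.sum_le_sum fun i _ => h1 i
    _ = p * T ^ 2 := by simp [Finset.sum_const, mul_comm]

lemma isCompact_cube (T : ℝ) : IsCompact (cube p T) := by
  refine Metric.isCompact_of_isClosed_isBounded (isClosed_cube T) ?_
  rw [isBounded_iff_forall_norm_le]
  exact ⟨Real.sqrt (p * T ^ 2), fun x hx => norm_le_of_mem_cube hx⟩

lemma cube_volume_lt_top (T : ℝ) : volume (cube p T) < ⊤ :=
  (isCompact_cube T).measure_lt_top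

lemma cube_measurableSet (T : ℝ) : MeasurableSet (cube p T) :=
  (isClosed_cube T).measurableSet

/-- Translation of a set integral of a nonnegative function. -/
lemma setIntegral_translate (g : EuclideanSpace ℝ (Fin p) → ℝ)
    (v : EuclideanSpace ℝ (Fin p)) (A : Set (EuclideanSpace ℝ (Fin p))) :
    ∫ x in A, g (x + v) = ∫ y in (fun x => x + v) '' A, g y := by
  have hemb : MeasurableEmbedding (fun x : EuclideanSpace ℝ (Fin p) => x + v) :=
    measurableEmbedding_addRight v
  have hmp : Measure.map (fun x : EuclideanSpace ℝ (Fin p) => x + v) volume = volume :=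
    (measurePreserving_add_right volume v).map_eq
  have hpre : (fun x : EuclideanSpace ℝ (Fin p) => x + v) ⁻¹' ((fun x => x + v) '' A) = A := by
    apply Set.preimage_image_eq
    exact fun a b h => by simpa using congrArg (fun w => w - v) h
  calc ∫ x in A, g (x + v)
      = ∫ x in (fun x : EuclideanSpace ℝ (Fin p) => x + v) ⁻¹' ((fun x => x + v) '' A),
          g ((fun x => x + v) x) := by rw [hpre]
    _ = ∫ y in (fun x => x + v) '' A, g y ∂(Measure.map (fun x => x + v) volume) :=
        (hemb.setIntegral_map _ _).symm
    _ = ∫ y in (fun x => x + v) '' A, g y := by rw [hmp]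

end helpers

open Complex in
lemma key_pl {F : ℂ → ℂ} (hF : Differentiable ℂ F) {σ T A' K₂ : ℝ} (p : ℕ)
    (hσ : 0 ≤ σ) (hT : 0 < T) (hA' : 0 < A')
    (hreal : ∀ t : ℝ, ‖F (t : ℂ)‖ ≤ A' * ‖(t : ℂ) + T * Complex.I‖ ^ p)
    (hgrow : ∀ z : ℂ, ‖F z‖ ≤ K₂ * Real.exp (σ * ‖z‖))
    {s : ℝ} (hs : 0 < s) :
    ‖F (Complex.I * s)‖ ≤ 2 * A' * (T + s) ^ p * Real.exp (σ * s) := by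
  have hK₂ : 0 ≤ K₂ := by
    have h0 := (norm_nonneg (F 0)).trans (hgrow 0)
    simpa using h0
  set φ : ℂ → ℂ := fun z => F z * Complex.exp (Complex.I * σ * z) / ((z + T * Complex.I) ^ p)
    with hφ_def
  have him : ∀ z : ℂ, (z + T * Complex.I).im = z.im + T := by intro z; simp
  have habs_ge : ∀ z : ℂ, 0 ≤ z.im → T ≤ ‖z + T * Complex.I‖ := by
    intro z hz
    have h1 : (z + T * Complex.I).im ≤ ‖z + T * Complex.I‖ :=
      (le_abs_self _).trans (Complex.abs_im_le_norm _)
    rw [him z] at h1; linarith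
  have h_ne : ∀ z : ℂ, 0 ≤ z.im → z + T * Complex.I ≠ 0 := by
    intro z hz h
    have := habs_ge z hz
    rw [h] at this; simp at this; linarith
  have hTp : (0:ℝ) < T ^ p := pow_pos hT p
  have hφ_diffAt : ∀ z : ℂ, 0 ≤ z.im → DifferentiableAt ℂ φ z := by
    intro z hz
    exact ((hF z).mul ((Complex.differentiable_exp.comp
      ((differentiable_const _).mul differentiable_id)) z)).div
      (((differentiable_id.add_const _).pow p) z) (pow_ne_zero _ (h_ne z hz))
  have hnormexp : ∀ z : ℂ, ‖Complex.exp (Complex.I * σ * z)‖ = Real.exp (-(σ * z.im)) := by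
    intro z
    rw [Complex.norm_exp]
    congr 1
    simp [Complex.mul_re, Complex.mul_im]
  have hφ_norm : ∀ z : ℂ, ‖φ z‖ =
      ‖F z‖ * Real.exp (-(σ * z.im)) / ‖z + T * Complex.I‖ ^ p := by
    intro z
    rw [hφ_def]
    simp only [norm_div, norm_mul, hnormexp, norm_pow]
  have hφ_bnd : ∀ z : ℂ, 0 ≤ z.im → ‖φ z‖ ≤ K₂ / T ^ p * Real.exp (σ * ‖z‖) := by
    intro z hz
    rw [hφ_norm z]
    have h2 : Real.exp (-(σ * z.im)) ≤ 1 := Real.exp_le_one_iff.2 (by nlinarith)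
    have h3 : T ^ p ≤ ‖z + T * Complex.I‖ ^ p :=
      pow_le_pow_left₀ hT.le (habs_ge z hz) p
    have h1 : ‖F z‖ * Real.exp (-(σ * z.im)) ≤ K₂ * Real.exp (σ * ‖z‖) * 1 :=
      mul_le_mul (hgrow z) h2 (Real.exp_pos _).le (by positivity)
    calc ‖F z‖ * Real.exp (-(σ * z.im)) / ‖z + T * Complex.I‖ ^ p
        ≤ K₂ * Real.exp (σ * ‖z‖) * 1 / T ^ p :=
          div_le_div₀ (by positivity) h1 hTp h3
      _ = K₂ / T ^ p * Real.exp (σ * ‖z‖) := by ring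
  have hφ_real : ∀ t : ℝ, ‖φ (t : ℂ)‖ ≤ A' := by
    intro t
    rw [hφ_norm]
    have h0 : ((t : ℂ)).im = 0 := by simp
    rw [h0]
    simp only [mul_zero, neg_zero, Real.exp_zero, mul_one]
    have hpos : (0:ℝ) < ‖(t : ℂ) + T * Complex.I‖ ^ p :=
      pow_pos (lt_of_lt_of_le hT (habs_ge (t : ℂ) (by simp))) p
    rw [div_le_iff₀ hpos]
    exact hreal t
  have hφ_im : ∀ y : ℝ, 0 ≤ y → ‖φ ((y : ℂ) * Complex.I)‖ ≤ K₂ / T ^ p := by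
    intro y hy
    have habs' : ‖(y:ℂ) * Complex.I‖ = y := by
      rw [norm_mul, Complex.norm_real, Real.norm_eq_abs, Complex.norm_I, mul_one, _root_.abs_of_nonneg hy]
    have habs2 : ‖(y:ℂ) * Complex.I + (T:ℂ) * Complex.I‖ = y + T := by
      rw [show (y:ℂ) * Complex.I + (T:ℂ) * Complex.I = ((y + T : ℝ) : ℂ) * Complex.I by
        push_cast; ring]
      rw [norm_mul, Complex.norm_real, Real.norm_eq_abs, Complex.norm_I, mul_one,
        _root_.abs_of_nonneg (by linarith : (0:ℝ) ≤ y + T)]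
    have him' : ((y : ℂ) * Complex.I).im = y := by simp
    rw [hφ_norm, him', habs2]
    have h1 : ‖F ((y:ℂ) * Complex.I)‖ * Real.exp (-(σ * y)) ≤ K₂ := by
      calc ‖F ((y:ℂ) * Complex.I)‖ * Real.exp (-(σ * y))
          ≤ K₂ * Real.exp (σ * ‖(y:ℂ) * Complex.I‖) * Real.exp (-(σ * y)) :=
            mul_le_mul_of_nonneg_right (hgrow _) (Real.exp_pos _).le
        _ = K₂ := by rw [habs', mul_assoc, ← Real.exp_add]; simp
    have h3 : T ^ p ≤ (y + T) ^ p := pow_le_pow_left₀ hT.le (by linarith) p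
    exact div_le_div₀ hK₂ h1 hTp h3
  -- Quadrant Phragmén–Lindelöf: bound on the upper half plane
  set Q : ℝ := max A' (K₂ / T ^ p) with hQ_def
  have hQA : A' ≤ Q := le_max_left _ _
  have hQK : K₂ / T ^ p ≤ Q := le_max_right _ _
  have hQpos : 0 < Q := lt_of_lt_of_le hA' hQA
  have hUHP : ∀ z : ℂ, 0 ≤ z.im → ‖φ z‖ ≤ Q := by
    intro z hz
    have hO : ∀ (S : Set ℂ), S ⊆ {w : ℂ | 0 ≤ w.im} →
        φ =O[Bornology.cobounded ℂ ⊓ Filter.principal S]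
          fun z => Real.exp (σ * ‖z‖ ^ (1:ℝ)) := by
      intro S hS
      rw [Asymptotics.isBigO_iff]
      refine ⟨K₂ / T ^ p, ?_⟩
      rw [Filter.eventually_inf_principal]
      refine Filter.Eventually.of_forall fun w hw => ?_
      rw [Real.rpow_one, Real.norm_of_nonneg (Real.exp_pos _).le]
      exact hφ_bnd w (hS hw)
    have hsub1 : (Set.Ioi (0:ℝ) ×ℂ Set.Ioi (0:ℝ)) ⊆ {w : ℂ | 0 ≤ w.im} := by
      intro w hw
      have h2 : (0:ℝ) < w.im := hw.2
      exact h2.le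
    have hsub2 : (Set.Iio (0:ℝ) ×ℂ Set.Ioi (0:ℝ)) ⊆ {w : ℂ | 0 ≤ w.im} := by
      intro w hw
      have h2 : (0:ℝ) < w.im := hw.2
      exact h2.le
    have hdiff : ∀ (S : Set ℂ), S ⊆ {w : ℂ | 0 ≤ w.im} → DiffContOnCl ℂ φ S := by
      intro S hS
      refine DifferentiableOn.diffContOnCl ?_
      have hcl : closure S ⊆ {w : ℂ | 0 ≤ w.im} :=
        closure_minimal hS (isClosed_le continuous_const continuous_im)
      exact fun w hw => (hφ_diffAt w (hcl hw)).differentiableWithinAt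
    rcases le_total 0 z.re with hre | hre
    · exact PhragmenLindelof.quadrant_I (hdiff _ hsub1)
        ⟨1, one_lt_two, σ, hO _ hsub1⟩
        (fun x hx => (hφ_real x).trans hQA)
        (fun x hx => by
          have := (hφ_im x hx).trans hQK
          simpa using this) hre hz
    · exact PhragmenLindelof.quadrant_II (hdiff _ hsub2)
        ⟨1, one_lt_two, σ, hO _ hsub2⟩
        (fun x hx => (hφ_real x).trans hQA)
        (fun x hx => by
          have := (hφ_im x hx).trans hQK
          simpa using this) hre hz
  -- Hadamard-type interpolation on a horizontal strip
  set r : ℝ := Q / A' with hr_def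
  have hr1 : 1 ≤ r := (one_le_div hA').2 hQA
  have hlogr : 0 ≤ Real.log r := Real.log_nonneg hr1
  have hlog2 : 0 < Real.log 2 := Real.log_pos one_lt_two
  set Y : ℝ := 2 * s * (1 + Real.log r / Real.log 2) with hY_def
  have hY : 0 < Y := by
    have : (0:ℝ) < 1 + Real.log r / Real.log 2 := by positivity
    positivity
  have hsY : s < Y := by
    have h1 : (0:ℝ) ≤ Real.log r / Real.log 2 := div_nonneg hlogr hlog2.le
    nlinarith
  set c : ℝ := Real.log r / Y with hc_def
  have hc0 : 0 ≤ c := div_nonneg hlogr hY.le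
  have hcY : c * Y = Real.log r := div_mul_cancel₀ _ hY.ne'
  have hsc : s * c ≤ Real.log 2 := by
    rw [hc_def, ← mul_div_assoc, div_le_iff₀ hY]
    have expand : Y * Real.log 2 = 2 * s * Real.log 2 + 2 * s * Real.log r := by
      rw [hY_def]; field_simp
    nlinarith
  set ψ : ℂ → ℂ := fun z => φ z * Complex.exp ((c : ℂ) * Complex.I * z) with hψ_def
  have hψ_norm : ∀ z : ℂ, ‖ψ z‖ = ‖φ z‖ * Real.exp (-(c * z.im)) := by
    intro z
    rw [hψ_def]
    simp only [norm_mul, Complex.norm_exp]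
    congr 2
    simp [Complex.mul_re, Complex.mul_im]
  have hψa : ∀ z : ℂ, z.im = 0 → ‖ψ z‖ ≤ A' := by
    intro z hz
    have hzre : z = ((z.re : ℝ) : ℂ) := by
      apply Complex.ext <;> simp [hz]
    rw [hψ_norm, hz]
    simp only [mul_zero, neg_zero, Real.exp_zero, mul_one]
    rw [hzre]
    exact hφ_real z.re
  have hψb : ∀ z : ℂ, z.im = Y → ‖ψ z‖ ≤ A' := by
    intro z hz
    rw [hψ_norm, hz]
    have h1 : ‖φ z‖ ≤ Q := hUHP z (by linarith)
    have h2 : Real.exp (-(c * Y)) = r⁻¹ := by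
      rw [hcY, Real.exp_neg, Real.exp_log (lt_of_lt_of_le one_pos hr1)]
    rw [h2]
    calc ‖φ z‖ * r⁻¹ ≤ Q * r⁻¹ :=
          mul_le_mul_of_nonneg_right h1 (by positivity)
      _ = A' := by
          rw [hr_def]
          field_simp
  have hdψ : DiffContOnCl ℂ ψ (Complex.im ⁻¹' Set.Ioo 0 Y) := by
    refine DifferentiableOn.diffContOnCl ?_
    have hcl : closure (Complex.im ⁻¹' Set.Ioo 0 Y) ⊆ {w : ℂ | 0 ≤ w.im} := by
      refine closure_minimal ?_ (isClosed_le continuous_const Complex.continuous_im)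
      intro w hw
      exact le_of_lt (hw.1 : (0:ℝ) < w.im)
    intro w hw
    exact ((hφ_diffAt w (hcl hw)).mul (((Complex.differentiable_exp.comp
      ((differentiable_const _).mul differentiable_id))) w)).differentiableWithinAt
  have hψ_strip : ∀ z : ℂ, z.im ∈ Set.Ioo (0:ℝ) Y → ‖ψ z‖ ≤ Q := by
    intro z hz
    rw [hψ_norm]
    have h1 : ‖φ z‖ ≤ Q := hUHP z hz.1.le
    have h2 : Real.exp (-(c * z.im)) ≤ 1 :=
      Real.exp_le_one_iff.2 (by nlinarith [hz.1.le])
    calc ‖φ z‖ * Real.exp (-(c * z.im)) ≤ Q * 1 :=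
          mul_le_mul h1 h2 (Real.exp_pos _).le hQpos.le
      _ = Q := mul_one Q
  have hψ_Is : ‖ψ (Complex.I * (s : ℂ))‖ ≤ A' := by
    refine PhragmenLindelof.horizontal_strip (a := 0) (b := Y) hdψ ?_ hψa hψb ?_ ?_
    · refine ⟨Real.pi / (2 * Y), ?_, 0, ?_⟩
      · rw [sub_zero]
        apply div_lt_div_of_pos_left Real.pi_pos hY
        linarith
      · rw [Asymptotics.isBigO_iff]
        refine ⟨Q, ?_⟩
        rw [Filter.eventually_inf_principal]
        refine Filter.Eventually.of_forall fun w hw => ?_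
        have : ‖ψ w‖ ≤ Q := hψ_strip w hw
        calc ‖ψ w‖ ≤ Q := this
          _ ≤ Q * ‖Real.exp (0 * Real.exp (Real.pi / (2 * Y) * |w.re|))‖ := by
              rw [zero_mul, Real.exp_zero, norm_one, mul_one]
    · simp [hs.le]
    · simp [hsY.le]
  have hφ_Is : ‖φ (Complex.I * (s : ℂ))‖ ≤ 2 * A' := by
    have h1 : ‖ψ (Complex.I * (s:ℂ))‖ = ‖φ (Complex.I * (s:ℂ))‖ * Real.exp (-(c * s)) := by
      rw [hψ_norm]
      congr 2
      simp
    have h2 : Real.exp (c * s) ≤ 2 := by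
      calc Real.exp (c * s) ≤ Real.exp (Real.log 2) := by
            apply Real.exp_le_exp.2; nlinarith
        _ = 2 := Real.exp_log two_pos
    have h3 := hψ_Is
    rw [h1] at h3
    have hprod : Real.exp (-(c * s)) * Real.exp (c * s) = 1 := by
      rw [← Real.exp_add]; simp
    have h4 : ‖φ (Complex.I * (s:ℂ))‖ ≤ A' * Real.exp (c * s) := by
      have h := mul_le_mul_of_nonneg_right h3 (Real.exp_pos (c * s)).le
      rwa [mul_assoc, hprod, mul_one] at h
    calc ‖φ (Complex.I * (s:ℂ))‖ ≤ A' * Real.exp (c * s) := h4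
      _ ≤ A' * 2 := mul_le_mul_of_nonneg_left h2 hA'.le
      _ = 2 * A' := by ring
  -- unwind: from φ back to F
  have hIs_im : (Complex.I * (s:ℂ)).im = s := by simp
  have habs3 : ‖Complex.I * (s:ℂ) + (T:ℂ) * Complex.I‖ = T + s := by
    rw [show Complex.I * (s:ℂ) + (T:ℂ) * Complex.I = ((T + s : ℝ) : ℂ) * Complex.I by
      push_cast; ring]
    rw [norm_mul, Complex.norm_real, Real.norm_eq_abs, Complex.norm_I, mul_one,
      _root_.abs_of_nonneg (by linarith : (0:ℝ) ≤ T + s)]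
  have hnorm_eq := hφ_norm (Complex.I * (s:ℂ))
  rw [hIs_im, habs3] at hnorm_eq
  have hTspos : (0:ℝ) < (T + s) ^ p := pow_pos (by linarith) p
  have h5 : ‖F (Complex.I * (s:ℂ))‖ * Real.exp (-(σ * s)) ≤ 2 * A' * (T + s) ^ p := by
    have h := hφ_Is
    rw [hnorm_eq, div_le_iff₀ hTspos] at h
    nlinarith [h]
  have h6 : Real.exp (-(σ * s)) * Real.exp (σ * s) = 1 := by
    rw [← Real.exp_add]; simp
  have h := mul_le_mul_of_nonneg_right h5 (Real.exp_pos (σ * s)).le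
  rwa [mul_assoc, h6, mul_one] at h


section Gdiff

variable {p : ℕ}

lemma G_hasDerivAt (f : EuclideanSpace ℂ (Fin p) → ℂ) (hf : Differentiable ℂ f)
    (u : EuclideanSpace ℝ (Fin p) → ℂ) (hu : Measurable u) (hu1 : ∀ x, ‖u x‖ ≤ 1)
    (E : EuclideanSpace ℂ (Fin p)) (hE : ‖E‖ ≤ 1)
    {C₀ σ : ℝ} (hσ : 0 ≤ σ) (hbound : ∀ z, ‖f z‖ ≤ C₀ * Real.exp (σ * ‖z‖))
    {T R : ℝ} (hR : 0 ≤ R) (hcube : ∀ x ∈ cube p T, ‖x‖ ≤ R) :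
    Differentiable ℂ (fun z : ℂ => ∫ x in cube p T, u x * f (toC p x + z • E)) := by
  letI : MeasurableSpace (EuclideanSpace ℂ (Fin p)) := borel _
  haveI : BorelSpace (EuclideanSpace ℂ (Fin p)) := ⟨rfl⟩
  have hC₀ : 0 ≤ C₀ := by
    have h0 := (norm_nonneg (f 0)).trans (hbound 0)
    simpa using h0
  set μ : Measure (EuclideanSpace ℝ (Fin p)) := volume.restrict (cube p T) with hμ
  haveI : IsFiniteMeasure μ := by
    constructor
    rw [hμ, Measure.restrict_apply_univ]
    exact (isCompact_cube T).measure_lt_top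
  intro z₀
  -- the one-variable slices
  have hline : ∀ x : EuclideanSpace ℝ (Fin p), ∀ z : ℂ,
      HasDerivAt (fun w : ℂ => toC p x + w • E) E z := by
    intro x z
    have h1 : HasDerivAt (fun w : ℂ => w • E) ((1:ℂ) • E) z := (hasDerivAt_id z).smul_const E
    rw [one_smul] at h1
    exact h1.const_add (toC p x)
  have hgx_diff : ∀ x : EuclideanSpace ℝ (Fin p),
      Differentiable ℂ (fun w : ℂ => f (toC p x + w • E)) := by
    intro x
    exact hf.comp ((differentiable_id.smul_const E).const_add (toC p x))
  have hgx_deriv : ∀ x : EuclideanSpace ℝ (Fin p), ∀ z : ℂ,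
      HasDerivAt (fun w : ℂ => f (toC p x + w • E))
        (fderiv ℂ f (toC p x + z • E) E) z := by
    intro x z
    exact ((hf (toC p x + z • E)).hasFDerivAt).comp_hasDerivAt z (hline x z)
  have hnorm_pt : ∀ (x : EuclideanSpace ℝ (Fin p)) (w : ℂ), x ∈ cube p T →
      ‖toC p x + w • E‖ ≤ R + ‖w‖ := by
    intro x w hx
    calc ‖toC p x + w • E‖ ≤ ‖toC p x‖ + ‖w • E‖ := norm_add_le _ _
      _ ≤ R + ‖w‖ := by
          rw [toC_norm, norm_smul]
          have h2 : ‖w‖ * ‖E‖ ≤ ‖w‖ * 1 := by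
            apply mul_le_mul_of_nonneg_left hE (norm_nonneg w)
          have := hcube x hx
          nlinarith [norm_nonneg w]
  -- Cauchy derivative estimate, uniform over the ball of radius 1 around z₀
  set bound : ℝ := C₀ * Real.exp (σ * (R + ‖z₀‖ + 2)) with hbound_def
  have h_deriv_bound : ∀ x ∈ cube p T, ∀ z ∈ Metric.ball z₀ 1,
      ‖fderiv ℂ f (toC p x + z • E) E‖ ≤ bound := by
    intro x hx z hz
    have hd : ‖deriv (fun w : ℂ => f (toC p x + w • E)) z‖ ≤ bound / 1 := by
      apply Complex.norm_deriv_le_of_forall_mem_sphere_norm_le one_pos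
      · exact (Differentiable.differentiableOn (hgx_diff x)).diffContOnCl
      · intro w hw
        have hw_norm : ‖w‖ ≤ ‖z₀‖ + 2 := by
          have h1 : dist w z = 1 := Metric.mem_sphere.1 hw
          have h2 : dist z z₀ < 1 := Metric.mem_ball.1 hz
          calc ‖w‖ = dist w 0 := by simp
            _ ≤ dist w z + dist z z₀ + dist z₀ 0 := dist_triangle4 w z z₀ 0
            _ ≤ 1 + 1 + ‖z₀‖ := by
                have : dist z₀ 0 = ‖z₀‖ := by simp
                linarith
            _ = ‖z₀‖ + 2 := by ring
        calc ‖f (toC p x + w • E)‖ ≤ C₀ * Real.exp (σ * ‖toC p x + w • E‖) := hbound _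
          _ ≤ bound := by
              rw [hbound_def]
              apply mul_le_mul_of_nonneg_left _ hC₀
              apply Real.exp_le_exp.2
              apply mul_le_mul_of_nonneg_left _ hσ
              have := hnorm_pt x w hx
              linarith [this]
    rw [div_one] at hd
    rwa [(hgx_deriv x z).deriv] at hd
  -- apply the dominated-derivative theorem
  have key := hasDerivAt_integral_of_dominated_loc_of_deriv_le (μ := μ)
    (F := fun z x => u x * f (toC p x + z • E))
    (F' := fun z x => u x * fderiv ℂ f (toC p x + z • E) E)
    (x₀ := z₀) (bound := fun _ => bound) (Metric.ball_mem_nhds z₀ one_pos)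
    ?_ ?_ ?_ ?_ ?_ ?_
  · exact ⟨_, key.2⟩
  · refine Filter.Eventually.of_forall fun z => ?_
    exact (hu.aestronglyMeasurable.restrict).mul
      ((hf.continuous.comp (toC_continuous.add continuous_const)).aestronglyMeasurable.restrict)
  · -- integrability at z₀
    have hint : IntegrableOn (fun x => f (toC p x + z₀ • E)) (cube p T) volume :=
      (hf.continuous.comp (toC_continuous.add continuous_const)).continuousOn.integrableOn_compact
        (isCompact_cube T)
    exact hint.bdd_mul (hu.aestronglyMeasurable.restrict)
      (ae_of_all _ hu1)
  · -- measurability of F' z₀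
    apply AEStronglyMeasurable.mul
    · exact hu.aestronglyMeasurable.restrict
    · have h1 : Measurable fun y : EuclideanSpace ℂ (Fin p) => fderiv ℂ f y E :=
        measurable_fderiv_apply_const ℂ f E
      have h2 : Continuous fun x : EuclideanSpace ℝ (Fin p) => toC p x + z₀ • E :=
        toC_continuous.add continuous_const
      exact ((h1.comp h2.measurable).aestronglyMeasurable)
  · -- bound
    rw [hμ]
    rw [MeasureTheory.ae_restrict_iff' (cube_measurableSet T)]
    refine Filter.Eventually.of_forall fun x hx => ?_
    intro z hz
    calc ‖u x * fderiv ℂ f (toC p x + z • E) E‖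
        = ‖u x‖ * ‖fderiv ℂ f (toC p x + z • E) E‖ := norm_mul _ _
      _ ≤ 1 * bound := by
          apply mul_le_mul (hu1 x) (h_deriv_bound x hx z hz) (norm_nonneg _) zero_le_one
      _ = bound := one_mul _
  · exact integrable_const _
  · refine Filter.Eventually.of_forall fun x => ?_
    intro z _
    exact ((hgx_deriv x z).const_mul (u x))

end Gdiff

section numeric

lemma final_numeric (p : ℕ) {B T : ℝ} (hB : 0 ≤ B) (hT : 0 ≤ T) :
    2 * (Real.sqrt 2 ^ p * ((B + (1/4:ℝ)^p) * 2^p)) * (2*T)^p ≤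
      2^(p+1) * (1 + 2*3^p*B) * T^p := by
  have hs2 : Real.sqrt 2 ≤ 3/2 := by
    rw [show (3:ℝ)/2 = Real.sqrt ((3/2)^2) by rw [Real.sqrt_sq (by norm_num)]]
    exact Real.sqrt_le_sqrt (by norm_num)
  have hs0 : (0:ℝ) ≤ Real.sqrt 2 := Real.sqrt_nonneg 2
  have hab : ((1:ℝ)/4)^p * ((2:ℝ)^p * (2:ℝ)^p) = 1 := by
    rw [← mul_pow, ← mul_pow]; norm_num
  have hF1 : Real.sqrt 2 ^ p * (2:ℝ)^p ≤ (3:ℝ)^p := by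
    rw [← mul_pow]
    exact pow_le_pow_left₀ (by positivity) (by nlinarith) p
  have hF2 : Real.sqrt 2 ^ p ≤ (2:ℝ)^p := pow_le_pow_left₀ hs0 (by nlinarith) p
  have hbp : (0:ℝ) < 2^p := by positivity
  have hep : (0:ℝ) < 3^p := by positivity
  have hap : (0:ℝ) ≤ Real.sqrt 2 ^ p := by positivity
  have hcp : (0:ℝ) ≤ T^p := by positivity
  have hexp : ((2:ℝ)*T)^p = 2^p * T^p := mul_pow 2 T p
  have hpow : (2:ℝ)^(p+1) = 2 * 2^p := by rw [pow_succ]; ring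
  rw [hexp, hpow]
  set a := Real.sqrt 2 ^ p
  set b := (2:ℝ)^p
  set c := T^p
  set d := ((1:ℝ)/4)^p
  set e := (3:ℝ)^p
  have t1 : 2*(a*((B+d)*b))*(b*c) = 2*((a*b)*(B*c)*b) + 2*(a*c)*(d*(b*b)) := by ring
  rw [t1, hab, mul_one]
  have rhs_eq : 2*b*(1+2*e*B)*c = 2*(b*c) + 4*(e*(B*c)*b) := by ring
  rw [rhs_eq, add_comm (2*(b*c)) _]
  apply add_le_add
  · have h := mul_le_mul_of_nonneg_right hF1 (mul_nonneg (mul_nonneg hB hcp) hbp.le)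
    nlinarith [h, mul_nonneg (mul_nonneg hep.le (mul_nonneg hB hcp)) hbp.le]
  · have h := mul_le_mul_of_nonneg_right hF2 hcp
    nlinarith [h]

end numeric

/-- the Lemma of the paper. -/
theorem lemma_shifted_integral (p : ℕ) (hp : 0 < p)
    (f : EuclideanSpace ℂ (Fin p) → ℂ) (C₀ σ : ℝ)
    (hf : Differentiable ℂ f)
    (hbound : ∀ z, ‖f z‖ ≤ C₀ * Real.exp (σ * ‖z‖))
    (hloc : LocallyIntegrable (fun x => f (toC p x)) volume)
    (hB : BNormFinite p (fun x => f (toC p x))) :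
    ∀ s₀ > (0:ℝ), ∃ T₀ : ℝ, ∀ T ≥ T₀, ∀ s : ℝ, 0 < s → s < s₀ →
      (∫ x in cube p T, ‖f (shiftFirst p hp s x)‖ * Real.exp (-s * σ)) ≤
        2^(p+1) * (1 + 2 * 3^p * BNorm p (fun x => f (toC p x))) * T^p := by
  intro s₀ hs₀
  set B := BNorm p (fun x => f (toC p x)) with hB_def
  -- nonnegativity of the Besicovitch norm
  have hB0 : 0 ≤ B := by
    apply Filter.le_limsup_of_frequently_le _ hB
    refine ((Filter.eventually_ge_atTop (1:ℝ)).mono fun T hT => ?_).frequently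
    have h1 : (0:ℝ) ≤ (2*T)^(-(p:ℤ)) := zpow_nonneg (by linarith) _
    have h2 : (0:ℝ) ≤ ∫ x in cube p T, ‖f (toC p x)‖ :=
      integral_nonneg fun x => norm_nonneg _
    exact mul_nonneg h1 h2
  have hC₀ : 0 ≤ C₀ := by
    have h0 := (norm_nonneg (f 0)).trans (hbound 0)
    simpa using h0
  rcases lt_or_ge σ 0 with hσneg | hσ
  · -- degenerate case : f ≡ 0 by Liouville
    have hfz : ∀ z, f z = 0 := by
      have hbd : Bornology.IsBounded (Set.range f) := by
        rw [isBounded_iff_forall_norm_le]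
        refine ⟨C₀, ?_⟩
        rintro _ ⟨z, rfl⟩
        calc ‖f z‖ ≤ C₀ * Real.exp (σ * ‖z‖) := hbound z
          _ ≤ C₀ * 1 := mul_le_mul_of_nonneg_left
              (Real.exp_le_one_iff.2 (mul_nonpos_of_nonpos_of_nonneg hσneg.le (norm_nonneg z)))
              hC₀
          _ = C₀ := mul_one _
      intro z
      have heq : ∀ n : ℕ, ‖f z‖ ≤ C₀ * Real.exp (σ * n) := by
        intro n
        have h1 : f z = f ((n:ℂ) • EuclideanSpace.single (⟨0, hp⟩ : Fin p) (1:ℂ)) :=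
          hf.apply_eq_apply_of_bounded hbd z _
        rw [h1]
        have h2 : ‖(n:ℂ) • EuclideanSpace.single (⟨0, hp⟩ : Fin p) (1:ℂ)‖ = n := by
          rw [norm_smul, EuclideanSpace.norm_single]
          simp
        calc ‖f _‖ ≤ C₀ * Real.exp (σ * ‖(n:ℂ) • EuclideanSpace.single (⟨0, hp⟩ : Fin p) (1:ℂ)‖) :=
              hbound _
          _ = C₀ * Real.exp (σ * n) := by rw [h2]
      have htend : Filter.Tendsto (fun n : ℕ => C₀ * Real.exp (σ * n)) Filter.atTop (nhds 0) := by
        have h3 : ∀ n : ℕ, C₀ * Real.exp (σ * n) = C₀ * (Real.exp σ)^n := by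
          intro n
          rw [mul_comm σ (n:ℝ), Real.exp_nat_mul]
        simp only [h3]
        rw [show (0:ℝ) = C₀ * 0 by ring]
        exact (tendsto_pow_atTop_nhds_zero_of_lt_one (Real.exp_pos σ).le
          (Real.exp_lt_one_iff.2 hσneg)).const_mul C₀
      have h4 : ‖f z‖ ≤ 0 := ge_of_tendsto htend (Filter.Eventually.of_forall heq)
      exact norm_le_zero_iff.1 h4
    refine ⟨1, fun T hT s hs hss₀ => ?_⟩
    have hzero : (∫ x in cube p T, ‖f (shiftFirst p hp s x)‖ * Real.exp (-s * σ)) = 0 := by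
      have : ∀ x, ‖f (shiftFirst p hp s x)‖ * Real.exp (-s * σ) = 0 := by
        intro x; rw [hfz _, norm_zero, zero_mul]
      simp only [this, integral_zero]
    rw [hzero]
    have h5 : (0:ℝ) ≤ T^p := pow_nonneg (by linarith) p
    have h6 : (0:ℝ) ≤ 1 + 2*3^p*B := by positivity
    positivity
  · -- main case σ ≥ 0
    set η : ℝ := (1/4:ℝ)^p with hη_def
    have hηpos : 0 < η := by positivity
    have hlt : Filter.limsup (fun T : ℝ => (2*T)^(-(p:ℤ)) * ∫ x in cube p T, ‖f (toC p x)‖)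
        Filter.atTop < B + η := lt_add_of_pos_right B hηpos
    have hev : ∀ᶠ R in Filter.atTop,
        (2*R)^(-(p:ℤ)) * (∫ x in cube p R, ‖f (toC p x)‖) < B + η :=
      Filter.eventually_lt_of_limsup_lt hlt hB
    obtain ⟨T₁', hT₁'⟩ := Filter.eventually_atTop.1 hev
    set T₁ : ℝ := max T₁' 1 with hT₁_def
    have hcube_int : ∀ R : ℝ, IntegrableOn (fun x => ‖f (toC p x)‖) (cube p R) volume :=
      fun R => (hloc.integrableOn_isCompact (isCompact_cube R)).norm
    have hbesi : ∀ R, T₁ ≤ R → (∫ x in cube p R, ‖f (toC p x)‖) ≤ (B + η) * (2*R)^p := by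
      intro R hR
      have h1 : T₁' ≤ R := le_trans (le_max_left _ _) hR
      have h2 : (1:ℝ) ≤ R := le_trans (le_max_right _ _) hR
      have h3 := hT₁' R h1
      have h4 : (0:ℝ) < (2*R)^p := pow_pos (by linarith) p
      have h5 : (2*R)^(-(p:ℤ)) = ((2*R)^p)⁻¹ := by
        rw [zpow_neg, zpow_natCast]
      rw [h5] at h3
      have h6 := mul_le_mul_of_nonneg_left h3.le h4.le
      rw [← mul_assoc, mul_inv_cancel₀ h4.ne', one_mul] at h6
      linarith [h6]
    refine ⟨max T₁ (max s₀ 1), fun T hT s hs hss₀ => ?_⟩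
    have hTT₁ : T₁ ≤ T := le_trans (le_max_left _ _) hT
    have hTs₀ : s₀ ≤ T := le_trans (le_trans (le_max_left _ _) (le_max_right _ _)) hT
    have hT1 : (1:ℝ) ≤ T := le_trans (le_trans (le_max_right _ _) (le_max_right _ _)) hT
    have hTpos : (0:ℝ) < T := by linarith
    -- setup
    set i₀ : Fin p := ⟨0, hp⟩ with hi₀_def
    set E1 : EuclideanSpace ℂ (Fin p) := EuclideanSpace.single i₀ (1:ℂ) with hE1_def
    have hE1 : ‖E1‖ ≤ 1 := by
      rw [hE1_def, EuclideanSpace.norm_single]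
      simp
    have shift_eq : ∀ x, shiftFirst p hp s x = toC p x + (Complex.I * (s:ℂ)) • E1 := by
      intro x
      ext i
      show (if i = i₀ then (x i : ℂ) + Complex.I * s else (x i : ℂ))
        = (toC p x + (Complex.I * (s:ℂ)) • E1) i
      have happ : (toC p x + (Complex.I * (s:ℂ)) • E1) i
          = (x i : ℂ) + (Complex.I * (s:ℂ)) * E1 i := by
        simp [toC]
      rw [happ, hE1_def]
      by_cases hi : i = i₀
      · rw [if_pos hi, EuclideanSpace.single_apply, if_pos hi, mul_one]
      · rw [if_neg hi, EuclideanSpace.single_apply, if_neg hi, mul_zero, add_zero]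
    set g : EuclideanSpace ℝ (Fin p) → ℂ := fun x => f (shiftFirst p hp s x) with hg_def
    have hg_eq : g = fun x => f (toC p x + (Complex.I * (s:ℂ)) • E1) :=
      funext fun x => by rw [hg_def]; exact congrArg f (shift_eq x)
    have hg_cont : Continuous g := by
      rw [hg_eq]
      exact hf.continuous.comp (toC_continuous.add continuous_const)
    set u : EuclideanSpace ℝ (Fin p) → ℂ := fun x => (‖g x‖ : ℂ) * (g x)⁻¹ with hu_def
    have hu_meas : Measurable u := by
      apply Measurable.mul
      · exact Complex.measurable_ofReal.comp hg_cont.norm.measurable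
      · exact hg_cont.measurable.inv
    have hu1 : ∀ x, ‖u x‖ ≤ 1 := by
      intro x
      rw [hu_def]
      by_cases hx : g x = 0
      · simp [hx]
      · have hn : ‖g x‖ ≠ 0 := norm_ne_zero_iff.2 hx
        rw [norm_mul, norm_inv, Complex.norm_real, Real.norm_eq_abs, abs_norm,
          mul_inv_cancel₀ hn]
    have hug : ∀ x, u x * g x = ((‖g x‖ : ℝ) : ℂ) := by
      intro x
      by_cases hx : g x = 0
      · simp [hu_def, hx]
      · rw [hu_def]
        field_simp
    set R : ℝ := Real.sqrt (p * T^2) with hR_def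
    have hR0 : 0 ≤ R := Real.sqrt_nonneg _
    set F : ℂ → ℂ := fun z : ℂ => ∫ x in cube p T, u x * f (toC p x + z • E1) with hF_def
    have hF_diff : Differentiable ℂ F :=
      G_hasDerivAt f hf u hu_meas hu1 E1 hE1 hσ hbound hR0
        (fun x hx => norm_le_of_mem_cube hx)
    set K₂ : ℝ := C₀ * Real.exp (σ * R) * (volume (cube p T)).toReal with hK2_def
    have hnorm_pt : ∀ (x : EuclideanSpace ℝ (Fin p)) (z : ℂ), x ∈ cube p T →
        ‖toC p x + z • E1‖ ≤ R + ‖z‖ := by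
      intro x z hx
      calc ‖toC p x + z • E1‖ ≤ ‖toC p x‖ + ‖z • E1‖ := norm_add_le _ _
        _ ≤ R + ‖z‖ := by
            rw [toC_norm, norm_smul]
            have h2 : ‖z‖ * ‖E1‖ ≤ ‖z‖ * 1 := mul_le_mul_of_nonneg_left hE1 (norm_nonneg z)
            have h3 := norm_le_of_mem_cube hx
            have h4 : ‖z‖ = ‖z‖ := rfl
            rw [← hR_def] at h3
            nlinarith [norm_nonneg z]
    have hgrow : ∀ z : ℂ, ‖F z‖ ≤ K₂ * Real.exp (σ * ‖z‖) := by
      intro z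
      have h1 : ∀ x ∈ cube p T, ‖u x * f (toC p x + z • E1)‖
          ≤ C₀ * Real.exp (σ * (R + ‖z‖)) := by
        intro x hx
        calc ‖u x * f (toC p x + z • E1)‖ = ‖u x‖ * ‖f (toC p x + z • E1)‖ := norm_mul _ _
          _ ≤ 1 * (C₀ * Real.exp (σ * (R + ‖z‖))) := by
              apply mul_le_mul (hu1 x) _ (norm_nonneg _) zero_le_one
              calc ‖f (toC p x + z • E1)‖ ≤ C₀ * Real.exp (σ * ‖toC p x + z • E1‖) := hbound _
                _ ≤ C₀ * Real.exp (σ * (R + ‖z‖)) := by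
                    apply mul_le_mul_of_nonneg_left _ hC₀
                    exact Real.exp_le_exp.2 (mul_le_mul_of_nonneg_left (hnorm_pt x z hx) hσ)
          _ = C₀ * Real.exp (σ * (R + ‖z‖)) := one_mul _
      have h2 := norm_setIntegral_le_of_norm_le_const (cube_volume_lt_top T)
        h1
      calc ‖F z‖ ≤ C₀ * Real.exp (σ * (R + ‖z‖)) * (volume (cube p T)).toReal := h2
        _ = K₂ * Real.exp (σ * ‖z‖) := by
            rw [hK2_def, mul_add σ R _, Real.exp_add]
            ring
    set A' : ℝ := Real.sqrt 2 ^ p * ((B + η) * 2^p) with hA'_def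
    have hA'pos : 0 < A' :=
      mul_pos (pow_pos (Real.sqrt_pos.2 two_pos) p) (mul_pos (by linarith) (pow_pos two_pos p))
    have hreal : ∀ t : ℝ, ‖F (t:ℂ)‖ ≤ A' * ‖(t:ℂ) + T*Complex.I‖^p := by
      intro t
      set e₁ : EuclideanSpace ℝ (Fin p) := EuclideanSpace.single i₀ (1:ℝ) with he₁_def
      have hshift_real : ∀ x : EuclideanSpace ℝ (Fin p),
          toC p x + ((t:ℝ):ℂ) • E1 = toC p (x + t • e₁) := by
        intro x
        ext i
        have happ1 : (toC p x + ((t:ℝ):ℂ) • E1) i = (x i : ℂ) + ((t:ℝ):ℂ) * E1 i := by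
          simp [toC]
        have happ2 : (toC p (x + t • e₁)) i = ((x i + t * e₁ i : ℝ) : ℂ) := by
          simp [toC]
        rw [happ1, happ2, hE1_def, he₁_def]
        by_cases hi : i = i₀
        · rw [EuclideanSpace.single_apply, EuclideanSpace.single_apply, if_pos hi, if_pos hi]
          push_cast
          ring
        · rw [EuclideanSpace.single_apply, EuclideanSpace.single_apply, if_neg hi, if_neg hi]
          push_cast
          ring
      have hintu : IntegrableOn (fun x => u x * f (toC p x + ((t:ℝ):ℂ) • E1)) (cube p T)
          volume := by
        have hint : IntegrableOn (fun x => f (toC p x + ((t:ℝ):ℂ) • E1)) (cube p T) volume :=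
          (hf.continuous.comp (toC_continuous.add continuous_const)).continuousOn.integrableOn_compact
            (isCompact_cube T)
        exact hint.bdd_mul hu_meas.aestronglyMeasurable.restrict (ae_of_all _ hu1)
      have hintf : IntegrableOn (fun x => ‖f (toC p x + ((t:ℝ):ℂ) • E1)‖) (cube p T) volume :=
        ((hf.continuous.comp (toC_continuous.add continuous_const)).continuousOn.integrableOn_compact
            (isCompact_cube T)).norm
      have step1 : ‖F (t:ℂ)‖ ≤ ∫ x in cube p T, ‖f (toC p x + ((t:ℝ):ℂ) • E1)‖ := by
        calc ‖F (t:ℂ)‖ ≤ ∫ x in cube p T, ‖u x * f (toC p x + ((t:ℝ):ℂ) • E1)‖ :=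
              norm_integral_le_integral_norm _
          _ ≤ ∫ x in cube p T, ‖f (toC p x + ((t:ℝ):ℂ) • E1)‖ := by
              apply integral_mono hintu.norm hintf
              intro x
              show ‖u x * f (toC p x + ((t:ℝ):ℂ) • E1)‖ ≤ ‖f (toC p x + ((t:ℝ):ℂ) • E1)‖
              rw [norm_mul]
              calc ‖u x‖ * ‖f (toC p x + ((t:ℝ):ℂ) • E1)‖
                  ≤ 1 * ‖f (toC p x + ((t:ℝ):ℂ) • E1)‖ :=
                    mul_le_mul_of_nonneg_right (hu1 x) (norm_nonneg _)
                _ = ‖f (toC p x + ((t:ℝ):ℂ) • E1)‖ := one_mul _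
      have step2 : (∫ x in cube p T, ‖f (toC p x + ((t:ℝ):ℂ) • E1)‖)
          = ∫ x in cube p T, ‖f (toC p (x + t • e₁))‖ := by
        simp only [hshift_real]
      have step3 : (∫ x in cube p T, ‖f (toC p (x + t • e₁))‖)
          = ∫ y in (fun x => x + t • e₁) '' (cube p T), ‖f (toC p y)‖ :=
        setIntegral_translate (fun y => ‖f (toC p y)‖) (t • e₁) (cube p T)
      have hsubset : (fun x => x + t • e₁) '' (cube p T) ⊆ cube p (T + |t|) := by
        rintro y ⟨x, hx, rfl⟩
        intro i
        have happ : ((fun x => x + t • e₁) x) i = x i + t * e₁ i := by simp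
        rw [happ, he₁_def, EuclideanSpace.single_apply]
        have h1 := (hx i).1
        have h2 := (hx i).2
        by_cases hi : i = i₀
        · rw [if_pos hi, mul_one]
          constructor
          · have := neg_abs_le t; simp only [Set.mem_Icc]; linarith
          · have := le_abs_self t; linarith
        · rw [if_neg hi, mul_zero, add_zero]
          constructor
          · have := abs_nonneg t; linarith
          · have := abs_nonneg t; linarith
      have step4 : (∫ y in (fun x => x + t • e₁) '' (cube p T), ‖f (toC p y)‖)
          ≤ ∫ y in cube p (T + |t|), ‖f (toC p y)‖ := by
        apply setIntegral_mono_set (hcube_int (T + |t|))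
        · exact Filter.Eventually.of_forall fun y => norm_nonneg _
        · exact HasSubset.Subset.eventuallyLE hsubset
      have step5 : (∫ y in cube p (T + |t|), ‖f (toC p y)‖) ≤ (B + η) * (2*(T + |t|))^p :=
        hbesi (T + |t|) (by linarith [abs_nonneg t])
      have habs : ‖(t:ℂ) + T*Complex.I‖ = Real.sqrt (t^2 + T^2) :=
        Complex.norm_add_mul_I t T
      have hTt : T + |t| ≤ Real.sqrt 2 * Real.sqrt (t^2 + T^2) := by
        rw [← Real.sqrt_mul (by norm_num : (0:ℝ) ≤ 2)]
        have h' : (T + |t|)^2 ≤ 2*(t^2+T^2) := by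
          nlinarith [sq_abs t, abs_nonneg t, sq_nonneg (|t| - T)]
        calc T + |t| = Real.sqrt ((T+|t|)^2) := (Real.sqrt_sq (by linarith [abs_nonneg t])).symm
          _ ≤ Real.sqrt (2*(t^2+T^2)) := Real.sqrt_le_sqrt h'
      have step6 : (B + η) * (2*(T + |t|))^p ≤ A' * ‖(t:ℂ) + T*Complex.I‖^p := by
        have hBη : (0:ℝ) ≤ B + η := by linarith
        calc (B + η) * (2*(T + |t|))^p = (B + η) * 2^p * (T + |t|)^p := by
              rw [mul_pow]; ring
          _ ≤ (B + η) * 2^p * (Real.sqrt 2 * ‖(t:ℂ) + T*Complex.I‖)^p := by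
              apply mul_le_mul_of_nonneg_left _ (by positivity)
              apply pow_le_pow_left₀ (by linarith [abs_nonneg t])
              rw [habs]
              exact hTt
          _ = A' * ‖(t:ℂ) + T*Complex.I‖^p := by
              rw [hA'_def, mul_pow]
              ring
      calc ‖F (t:ℂ)‖ ≤ ∫ x in cube p T, ‖f (toC p x + ((t:ℝ):ℂ) • E1)‖ := step1
        _ = ∫ x in cube p T, ‖f (toC p (x + t • e₁))‖ := step2
        _ = ∫ y in (fun x => x + t • e₁) '' (cube p T), ‖f (toC p y)‖ := step3
        _ ≤ ∫ y in cube p (T + |t|), ‖f (toC p y)‖ := step4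
        _ ≤ (B + η) * (2*(T + |t|))^p := step5
        _ ≤ A' * ‖(t:ℂ) + T*Complex.I‖^p := step6
    have hkey := key_pl hF_diff p hσ hTpos hA'pos hreal hgrow hs
    -- identify F (I s) with the integral of ‖g‖
    have hFIs : F (Complex.I * (s:ℂ)) = ((∫ x in cube p T, ‖g x‖ : ℝ) : ℂ) := by
      rw [hF_def]
      have hcongr : ∀ x : EuclideanSpace ℝ (Fin p),
          u x * f (toC p x + (Complex.I * (s:ℂ)) • E1) = ((‖g x‖ : ℝ) : ℂ) := by
        intro x
        rw [← shift_eq x]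
        exact hug x
      simp only [hcongr]
      exact integral_ofReal
    have hILHS : (∫ x in cube p T, ‖g x‖) ≤ ‖F (Complex.I * (s:ℂ))‖ := by
      rw [hFIs, Complex.norm_real, Real.norm_eq_abs]
      exact le_abs_self _
    have hexp_cancel : Real.exp (σ * s) * Real.exp (-s * σ) = 1 := by
      rw [← Real.exp_add]
      ring_nf
      exact Real.exp_zero
    calc (∫ x in cube p T, ‖f (shiftFirst p hp s x)‖ * Real.exp (-s * σ))
        = (∫ x in cube p T, ‖g x‖) * Real.exp (-s * σ) := by
          rw [← integral_mul_const]
      _ ≤ ‖F (Complex.I * (s:ℂ))‖ * Real.exp (-s * σ) :=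
          mul_le_mul_of_nonneg_right hILHS (Real.exp_pos _).le
      _ ≤ (2 * A' * (T + s)^p * Real.exp (σ * s)) * Real.exp (-s * σ) :=
          mul_le_mul_of_nonneg_right hkey (Real.exp_pos _).le
      _ = 2 * A' * (T + s)^p := by
          rw [mul_assoc, hexp_cancel, mul_one]
      _ ≤ 2 * A' * (2*T)^p := by
          apply mul_le_mul_of_nonneg_left _ (by linarith)
          apply pow_le_pow_left₀ (by linarith) (by linarith)
      _ = 2 * (Real.sqrt 2 ^ p * ((B + η) * 2^p)) * (2*T)^p := by rw [hA'_def]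
      _ ≤ 2^(p+1) * (1 + 2*3^p*B) * T^p := final_numeric p hB0 (by linarith)
end
end

section
/- Let g be holomorphic in the upper half-plane ℂ⁺, continuous on its closure, of exponential type (|g(w)| ≤ c e^{a|w|}), and bounded on the real axis. Then for every w ∈ ℂ⁺, |g(w)| ≤ (sup_{t ∈ ℝ} |g(t)|) · e^{h · Im w}, where h = limsup_{t→+∞} (log|g(it)|)/t. -/
open MeasureTheory Filter

noncomputable section

/-- Phragmén–Lindelöf principle in the upper half-plane. -/
theorem phragmen_lindelof_halfplane (g : ℂ → ℂ) (c a : ℝ)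
    (hg : DifferentiableOn ℂ g {w : ℂ | 0 < w.im})
    (hc : ContinuousOn g {w : ℂ | 0 ≤ w.im})
    (hbound : ∀ w : ℂ, 0 ≤ w.im → ‖g w‖ ≤ c * Real.exp (a * ‖w‖))
    (hbdd : BddAbove (Set.range fun t : ℝ => ‖g t‖)) :
    ∀ w : ℂ, 0 < w.im →
      ‖g w‖ ≤ (⨆ t : ℝ, ‖g (t : ℂ)‖) *
        Real.exp ((Filter.limsup (fun t : ℝ => Real.log ‖g (Complex.I * t)‖ / t)
          Filter.atTop) * w.im) := by
  intro w hw
  set M : ℝ := ⨆ t : ℝ, ‖g (t : ℂ)‖ with hM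
  set L : ℝ := Filter.limsup (fun t : ℝ => Real.log ‖g (Complex.I * t)‖ / t) Filter.atTop with hLdef
  have hMt : ∀ t : ℝ, ‖g (t : ℂ)‖ ≤ M := fun t => le_ciSup hbdd t
  have hc0 : 0 ≤ c := by
    have h := hbound 0 (by simp)
    simpa using (norm_nonneg (g 0)).trans h
  -- boundedness of the limsup sequence
  have hbddL : IsBoundedUnder (· ≤ ·) atTop
      (fun t : ℝ => Real.log ‖g (Complex.I * t)‖ / t) := by
    refine isBoundedUnder_of_eventually_le (a := max 0 (|Real.log c| + |a|)) ?_
    filter_upwards [eventually_ge_atTop (1 : ℝ)] with t ht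
    have ht0 : 0 < t := lt_of_lt_of_le one_pos ht
    have him : (Complex.I * (t : ℂ)).im = t := by simp
    rcases eq_or_lt_of_le (norm_nonneg (g (Complex.I * t))) with h0 | h0
    · rw [← h0]
      simpa using le_max_left (0:ℝ) (|Real.log c| + |a|)
    · have hb := hbound (Complex.I * t) (by rw [him]; exact ht0.le)
      have habs : ‖Complex.I * (t : ℂ)‖ = t := by
        simp [abs_of_pos ht0]
      rw [habs] at hb
      have hcpos : 0 < c := by
        by_contra hcn
        push_neg at hcn
        have : c * Real.exp (a * t) ≤ 0 :=
          mul_nonpos_of_nonpos_of_nonneg hcn (Real.exp_pos _).le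
        linarith [lt_of_lt_of_le h0 hb]
      have hlog : Real.log ‖g (Complex.I * t)‖ ≤ Real.log c + a * t := by
        have := Real.log_le_log h0 hb
        rwa [Real.log_mul (ne_of_gt hcpos) (Real.exp_ne_zero _), Real.log_exp] at this
      have : Real.log ‖g (Complex.I * t)‖ / t ≤ (Real.log c + a * t) / t := by
        gcongr
      refine le_max_of_le_right (this.trans ?_)
      rw [add_div, mul_div_assoc, div_self (ne_of_gt ht0), mul_one]
      have h1 : Real.log c / t ≤ |Real.log c| := by
        calc Real.log c / t ≤ |Real.log c| / t := by
              gcongr; exact le_abs_self _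
          _ ≤ |Real.log c| / 1 := by gcongr
          _ = |Real.log c| := div_one _
      have h2 : a ≤ |a| := le_abs_self a
      linarith
  -- main estimate for each ε > 0
  have key : ∀ ε : ℝ, 0 < ε → ‖g w‖ ≤ M * Real.exp ((L + ε) * w.im) := by
    intro ε hε
    set f : ℂ → ℂ := fun z => g z * Complex.exp (Complex.I * ((L + ε : ℝ) : ℂ) * z) with hf
    have hnorm : ∀ z : ℂ, ‖f z‖ = ‖g z‖ * Real.exp (-(L + ε) * z.im) := by
      intro z
      rw [hf]
      simp only [norm_mul, Complex.norm_exp]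
      congr 2
      simp [Complex.mul_re, Complex.mul_im]
      ring
    set F : ℂ → ℂ := fun z => f (Complex.I * z) with hF
    have hIm : ∀ z : ℂ, (Complex.I * z).im = z.re := by intro z; simp
    -- differentiability
    have hfd : DifferentiableOn ℂ f {z : ℂ | 0 < z.im} := by
      refine hg.mul (Differentiable.differentiableOn ?_)
      exact (Complex.differentiable_exp.comp ((differentiable_const _).mul differentiable_id))
    have hfc : ContinuousOn f {z : ℂ | 0 ≤ z.im} := by
      refine hc.mul (Continuous.continuousOn ?_)
      exact Complex.continuous_exp.comp (continuous_const.mul continuous_id)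
    have hFd : DiffContOnCl ℂ F {z : ℂ | 0 < z.re} := by
      constructor
      · refine hfd.comp (((differentiable_const Complex.I).mul differentiable_id).differentiableOn)
          (fun z hz => ?_)
        simpa [hIm z] using hz
      · have hclsub : closure {z : ℂ | 0 < z.re} ⊆ {z : ℂ | 0 ≤ z.re} :=
          closure_minimal (fun z hz => show (0:ℝ) ≤ z.re from le_of_lt hz)
            (isClosed_le continuous_const Complex.continuous_re)
        have hcont : ContinuousOn F {z : ℂ | 0 ≤ z.re} := by
          refine hfc.comp (Continuous.continuousOn (continuous_const.mul continuous_id))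
            (fun z hz => ?_)
          simpa [hIm z] using hz
        exact hcont.mono hclsub
    -- growth condition
    have hexp : ∃ c' < (2 : ℝ), ∃ B,
        F =O[Bornology.cobounded ℂ ⊓ Filter.principal {z : ℂ | 0 < z.re}]
          fun z => Real.exp (B * ‖z‖ ^ c') := by
      refine ⟨1, one_lt_two, a + |L + ε|, Asymptotics.IsBigO.of_bound c ?_⟩
      rw [eventually_inf_principal]
      refine Eventually.of_forall fun z hz => ?_
      have hz' : (0:ℝ) < z.re := hz
      have him : (Complex.I * z).im = z.re := hIm z
      have habs : ‖Complex.I * z‖ = ‖z‖ := by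
        simp
      have hb := hbound (Complex.I * z) (by rw [him]; exact hz'.le)
      rw [habs] at hb
      have hFn : ‖F z‖ = ‖g (Complex.I * z)‖ * Real.exp (-(L + ε) * z.re) := by
        rw [hF]; rw [hnorm (Complex.I * z), him]
      have h1 : Real.exp (-(L + ε) * z.re) ≤ Real.exp (|L + ε| * ‖z‖) := by
        apply Real.exp_le_exp.2
        calc -(L + ε) * z.re ≤ |(-(L + ε)) * z.re| := le_abs_self _
          _ = |L + ε| * |z.re| := by rw [abs_mul, abs_neg]
          _ ≤ |L + ε| * ‖z‖ := by
              gcongr; exact Complex.abs_re_le_norm z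
      calc ‖F z‖ = ‖g (Complex.I * z)‖ * Real.exp (-(L + ε) * z.re) := hFn
        _ ≤ (c * Real.exp (a * ‖z‖)) * Real.exp (|L + ε| * ‖z‖) := by
            apply mul_le_mul hb h1 (Real.exp_pos _).le
            positivity
        _ = c * Real.exp ((a + |L + ε|) * ‖z‖) := by
            rw [mul_assoc, ← Real.exp_add]; ring_nf
        _ = c * ‖Real.exp ((a + |L + ε|) * ‖z‖ ^ (1:ℝ))‖ := by
            rw [Real.rpow_one, Real.norm_eq_abs, abs_of_pos (Real.exp_pos _)]
    -- bounded on the positive real axis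
    have hre : IsBoundedUnder (· ≤ ·) atTop fun x : ℝ => ‖F x‖ := by
      have hev : ∀ᶠ t : ℝ in atTop,
          Real.log ‖g (Complex.I * t)‖ / t < L + ε :=
        eventually_lt_of_limsup_lt (by rw [← hLdef]; linarith) hbddL
      refine isBoundedUnder_of_eventually_le (a := 1) ?_
      filter_upwards [hev, eventually_ge_atTop (1 : ℝ)] with t hlt ht
      have ht0 : 0 < t := lt_of_lt_of_le one_pos ht
      have hgle : ‖g (Complex.I * t)‖ ≤ Real.exp ((L + ε) * t) := by
        rcases eq_or_lt_of_le (norm_nonneg (g (Complex.I * t))) with h0 | h0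
        · rw [← h0]; exact (Real.exp_pos _).le
        · have : Real.log ‖g (Complex.I * t)‖ < (L + ε) * t := by
            rw [div_lt_iff₀ ht0] at hlt; linarith [hlt]
          exact le_of_lt ((Real.log_lt_iff_lt_exp h0).1 this)
      have hFn : ‖F (t : ℂ)‖ = ‖g (Complex.I * t)‖ * Real.exp (-(L + ε) * t) := by
        rw [hF, hnorm (Complex.I * t)]
        congr 2
        simp
      rw [hFn]
      calc ‖g (Complex.I * t)‖ * Real.exp (-(L + ε) * t)
          ≤ Real.exp ((L + ε) * t) * Real.exp (-(L + ε) * t) := by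
            gcongr
        _ = 1 := by rw [← Real.exp_add]; ring_nf; exact Real.exp_zero
    -- bounded by M on the imaginary axis
    have him : ∀ x : ℝ, ‖F ((x : ℂ) * Complex.I)‖ ≤ M := by
      intro x
      have harg : Complex.I * ((x : ℂ) * Complex.I) = ((-x : ℝ) : ℂ) := by
        push_cast
        rw [mul_comm (x : ℂ) Complex.I, ← mul_assoc, Complex.I_mul_I]
        ring
      calc ‖F ((x : ℂ) * Complex.I)‖
          = ‖f (Complex.I * ((x : ℂ) * Complex.I))‖ := rfl
        _ = ‖g ((-x : ℝ) : ℂ)‖ := by rw [harg, hnorm]; simp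
        _ ≤ M := hMt (-x)
    -- apply Phragmén–Lindelöf on the right half-plane
    have happ := PhragmenLindelof.right_half_plane_of_bounded_on_real hFd hexp hre him
      (z := -Complex.I * w) (by simp [Complex.neg_im]; linarith [hw])
    have hzw : Complex.I * (-Complex.I * w) = w := by
      rw [← mul_assoc, mul_neg, Complex.I_mul_I]; ring
    have happ2 : ‖f w‖ ≤ M := by
      have e : f w = F (-Complex.I * w) := by simp only [hF]; rw [hzw]
      rw [e]; exact happ
    rw [hnorm] at happ2
    calc ‖g w‖ = (‖g w‖ * Real.exp (-(L + ε) * w.im)) * Real.exp ((L + ε) * w.im) := by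
          rw [mul_assoc, ← Real.exp_add]
          ring_nf
          simp
      _ ≤ M * Real.exp ((L + ε) * w.im) := by
          exact mul_le_mul_of_nonneg_right happ2 (Real.exp_pos _).le
  -- take ε → 0⁺
  have tend : Filter.Tendsto (fun ε : ℝ => M * Real.exp ((L + ε) * w.im)) (nhdsWithin 0 (Set.Ioi 0))
      (nhds (M * Real.exp (L * w.im))) := by
    have hcont : Continuous fun ε : ℝ => M * Real.exp ((L + ε) * w.im) := by
      continuity
    have := hcont.tendsto 0
    simp only [add_zero] at this
    exact this.mono_left nhdsWithin_le_nhds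
  exact ge_of_tendsto tend (eventually_nhdsWithin_of_forall fun ε hε => key ε hε)

end
end

section
/- Let F be holomorphic on a neighborhood of the strip A = {z ∈ ℂ : |Im z| ≤ 1}, and suppose |F(z)·(sin z / z)^p| ≤ C for all z ∈ A with z ∉ ⋃_{n ∈ ℤ} B(nπ, 1/2). Then |F(z)·(sin z / z)^p| ≤ 2^p·C' for all z ∈ A, where C' is a constant obtained via the maximum principle; in particular |F(z)| ≤ C'' (1 + |z|)^p on A for a suitable constant C''. -/
open MeasureTheory Filter

noncomputable section

/-- sin z / z extended holomorphically by 1 at z = 0. -/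
def sinc (z : ℂ) : ℂ := if z = 0 then 1 else Complex.sin z / z

lemma sinc_eq_dslope : sinc = dslope Complex.sin 0 := by
  funext z
  by_cases h : z = 0
  · subst h
    simp [sinc, dslope_same, Complex.deriv_sin]
  · rw [sinc, if_neg h, dslope_of_ne _ h, slope_def_field]
    simp [div_eq_mul_inv]

lemma differentiable_sinc : Differentiable ℂ sinc := by
  rw [sinc_eq_dslope, ← differentiableOn_univ]
  exact (Complex.differentiableOn_dslope (by simp)).mpr
    Complex.differentiable_sin.differentiableOn

lemma abs_sin_sq (z : ℂ) :
    ‖Complex.sin z‖ ^ 2 = Real.sin z.re ^ 2 + Real.sinh z.im ^ 2 := by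
  have hre : (Complex.sin z).re = Real.sin z.re * Real.cosh z.im := by
    rw [Complex.sin_eq]; simp [Complex.sin_ofReal_re, Complex.cos_ofReal_re, Complex.sinh_ofReal_re, Complex.cosh_ofReal_re]
  have him : (Complex.sin z).im = Real.cos z.re * Real.sinh z.im := by
    rw [Complex.sin_eq]; simp [Complex.sin_ofReal_re, Complex.cos_ofReal_re, Complex.sinh_ofReal_re, Complex.cosh_ofReal_re]
  rw [Complex.sq_norm, Complex.normSq_apply, hre, him]
  have h1 := Real.cosh_sq z.im
  have h2 := Real.sin_sq_add_cos_sq z.re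
  nlinarith

lemma sinh_sq_ge (y : ℝ) : y ^ 2 ≤ Real.sinh y ^ 2 := by
  rcases le_or_gt 0 y with hy | hy
  · have := Real.self_le_sinh_iff.mpr hy
    nlinarith
  · have h0 : 0 ≤ -y := by linarith
    have := Real.self_le_sinh_iff.mpr h0
    rw [Real.sinh_neg] at this
    nlinarith

lemma sin_lower {z : ℂ} (him : |z.im| ≤ 1)
    (hz : ∀ n : ℤ, (1:ℝ)/2 ≤ dist z ((n : ℂ) * Real.pi)) :
    1/4 ≤ ‖Complex.sin z‖ := by
  set x := z.re with hx
  set y := z.im with hy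
  have hpi := Real.pi_gt_three
  set n : ℤ := round (x / Real.pi) with hn
  set d : ℝ := |x - n * Real.pi| with hd
  have hd0 : 0 ≤ d := abs_nonneg _
  have hdle : d ≤ Real.pi / 2 := by
    have h1 : |x / Real.pi - n| ≤ 1/2 := abs_sub_round _
    have h2 : |x / Real.pi - n| * Real.pi = d := by
      have h3 : (x / Real.pi - n) * Real.pi = x - n * Real.pi := by
        field_simp
      calc |x / Real.pi - n| * Real.pi = |x / Real.pi - n| * |Real.pi| := by
            rw [abs_of_pos Real.pi_pos]
        _ = |(x / Real.pi - n) * Real.pi| := (abs_mul _ _).symm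
        _ = d := by rw [h3]
    nlinarith [abs_nonneg (x / Real.pi - n)]
  have hdist : (1:ℝ)/4 ≤ d ^ 2 + y ^ 2 := by
    have h := hz n
    rw [Complex.dist_eq] at h
    have h2 : ‖z - n * Real.pi‖ ^ 2 = (x - n * Real.pi) ^ 2 + y ^ 2 := by
      rw [Complex.sq_norm, Complex.normSq_apply]
      have hre : ((n : ℂ) * (Real.pi : ℂ)).re = (n : ℝ) * Real.pi := by simp
      have him2 : ((n : ℂ) * (Real.pi : ℂ)).im = 0 := by simp
      simp only [Complex.sub_re, Complex.sub_im, hre, him2]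
      ring_nf
      rw [hx, hy]
      ring
    have habs : ‖z - n * Real.pi‖ ^ 2 ≥ (1/2)^2 := by
      nlinarith [norm_nonneg (z - n * Real.pi)]
    rw [h2] at habs
    have : d ^ 2 = (x - n * Real.pi) ^ 2 := sq_abs _
    nlinarith
  have hsinx : |Real.sin x| = Real.sin d := by
    have h1 : Real.sin ((x - n * Real.pi) + n * Real.pi) = (-1)^n * Real.sin (x - n * Real.pi) :=
      Real.sin_add_int_mul_pi _ _
    have h2 : |Real.sin x| = |Real.sin (x - n * Real.pi)| := by
      have h1' : Real.sin x = (-1)^n * Real.sin (x - n * Real.pi) := by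
        rw [← h1]; ring_nf
      rw [h1', abs_mul]
      have : |((-1 : ℝ)) ^ n| = 1 := by
        rcases Int.even_or_odd n with he | ho
        · rw [he.neg_one_zpow]; simp
        · rw [Odd.neg_one_zpow ho]; simp
      rw [this, one_mul]
    have h3 : |Real.sin (x - n * Real.pi)| = |Real.sin d| := by
      rcases abs_choice (x - n * Real.pi) with h | h
      · rw [hd, h]
      · rw [hd, h, Real.sin_neg, abs_neg]
    rw [h2, h3, abs_of_nonneg]
    exact Real.sin_nonneg_of_nonneg_of_le_pi hd0 (by linarith)
  have key : (1:ℝ)/16 ≤ Real.sin x ^ 2 + Real.sinh y ^ 2 := by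
    rcases le_or_gt (1/4 : ℝ) |y| with hy4 | hy4
    · have h1 : (1:ℝ)/16 ≤ y ^ 2 := by nlinarith [abs_nonneg y, sq_abs y]
      have := sinh_sq_ge y
      nlinarith [sq_nonneg (Real.sin x)]
    · have hd2 : (3:ℝ)/16 ≤ d ^ 2 := by nlinarith [sq_abs y, abs_nonneg y]
      have hdpos : (1:ℝ)/3 < d := by nlinarith
      have hsind : (1:ℝ)/4 ≤ Real.sin d := by
        rcases le_or_gt d 1 with h1 | h1
        · have := Real.sin_gt_sub_cube (x := d) (by linarith)
          nlinarith
        · have hmono : Real.sin 1 ≤ Real.sin d := by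
            apply Real.strictMonoOn_sin.monotoneOn
            · constructor <;> [linarith; linarith]
            · constructor <;> [linarith; linarith]
            · linarith
          have := Real.sin_gt_sub_cube (by norm_num : (0:ℝ) < 1)
          nlinarith
      calc (1:ℝ)/16 ≤ Real.sin d ^ 2 := by nlinarith
        _ ≤ _ := by nlinarith [sq_nonneg (Real.sinh y), sq_abs (Real.sin x), hsinx]
  have h := abs_sin_sq z
  nlinarith [norm_nonneg (Complex.sin z)]

lemma sinc_lower {z : ℂ} (him : |z.im| ≤ 1)
    (hz : ∀ n : ℤ, (1:ℝ)/2 ≤ dist z ((n : ℂ) * Real.pi)) :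
    (4 * (1 + ‖z‖))⁻¹ ≤ ‖sinc z‖ := by
  have habs : (1:ℝ)/2 ≤ ‖z‖ := by
    have := hz 0
    simpa [Complex.dist_eq] using this
  have hz0 : z ≠ 0 := by
    intro h; rw [h] at habs; simp at habs; linarith
  rw [sinc, if_neg hz0, norm_div]
  have ha0 : (0:ℝ) ≤ ‖z‖ := norm_nonneg z
  have h2 : (0:ℝ) < ‖z‖ := by linarith
  have hsin := sin_lower him hz
  rw [le_div_iff₀ h2]
  have h4 : (0:ℝ) < 4 * (1 + ‖z‖) := by positivity
  have h5 : (4 * (1 + ‖z‖))⁻¹ * ‖z‖ ≤ 1/4 := by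
    rw [inv_mul_le_iff₀ h4]
    nlinarith
  linarith

lemma sphere_off {n : ℤ} {w : ℂ} (hw : dist w ((n : ℂ) * Real.pi) = 1/2) :
    ∀ m : ℤ, (1:ℝ)/2 ≤ dist w ((m : ℂ) * Real.pi) := by
  intro m
  rcases eq_or_ne m n with rfl | hmn
  · exact hw.ge
  · have hcent : Real.pi ≤ dist ((n : ℂ) * Real.pi) ((m : ℂ) * Real.pi) := by
      rw [Complex.dist_eq]
      have heq : (n : ℂ) * Real.pi - (m : ℂ) * Real.pi = ((n - m : ℤ) : ℂ) * Real.pi := by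
        push_cast; ring
      rw [heq, norm_mul, Complex.norm_intCast, Complex.norm_real, Real.norm_eq_abs,
        abs_of_pos Real.pi_pos]
      have h1 : (1:ℝ) ≤ |((n - m : ℤ) : ℝ)| := by
        rw [← Int.cast_abs]
        exact_mod_cast Int.one_le_abs (sub_ne_zero.mpr (Ne.symm hmn))
      nlinarith [Real.pi_pos]
    have htri := dist_triangle ((n : ℂ) * Real.pi) w ((m : ℂ) * Real.pi)
    rw [dist_comm ((n : ℂ) * Real.pi) w, hw] at htri
    have := Real.pi_gt_three
    linarith

lemma ball_im {n : ℤ} {w : ℂ} (hw : w ∈ Metric.closedBall ((n : ℂ) * Real.pi) (1/2)) :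
    |w.im| ≤ 1 := by
  rw [Metric.mem_closedBall, Complex.dist_eq] at hw
  have h1 : |(w - (n : ℂ) * Real.pi).im| ≤ ‖w - (n : ℂ) * Real.pi‖ :=
    Complex.abs_im_le_norm _
  have h2 : (w - (n : ℂ) * Real.pi).im = w.im := by simp
  rw [h2] at h1
  linarith

/-- a bound on F(z)·(sin z/z)^p off the discs around the zeros nπ
extends, via the maximum principle, to the whole strip |Im z| ≤ 1, and yields
polynomial growth of F on the strip. -/
theorem strip_max_principle (p : ℕ) (F : ℂ → ℂ) (C : ℝ)
    (hF : ∃ U : Set ℂ, IsOpen U ∧ {z : ℂ | |z.im| ≤ 1} ⊆ U ∧ DifferentiableOn ℂ F U)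
    (hbound : ∀ z : ℂ, |z.im| ≤ 1 →
      z ∉ ⋃ n : ℤ, Metric.ball ((n : ℂ) * Real.pi) (1/2) →
      ‖F z * (sinc z)^p‖ ≤ C) :
    (∃ C' : ℝ, ∀ z : ℂ, |z.im| ≤ 1 → ‖F z * (sinc z)^p‖ ≤ 2^p * C') ∧
    (∃ C'' : ℝ, ∀ z : ℂ, |z.im| ≤ 1 → ‖F z‖ ≤ C'' * (1 + ‖z‖)^p) := by
  obtain ⟨U, hUopen, hUsub, hFdiff⟩ := hF
  set M := max C 0 with hMdef
  have hM0 : 0 ≤ M := le_max_right _ _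
  have hCM : C ≤ M := le_max_left _ _
  set G : ℂ → ℂ := fun z => F z * (sinc z)^p with hGdef
  have hGdiff : DifferentiableOn ℂ G U :=
    hFdiff.mul ((differentiable_sinc.pow p).differentiableOn)
  have hhalf : ((1:ℝ)/2) ≠ 0 := by norm_num
  -- the bound off the balls, in distance form
  have hb' : ∀ z : ℂ, |z.im| ≤ 1 → (∀ n : ℤ, (1:ℝ)/2 ≤ dist z ((n : ℂ) * Real.pi)) →
      ‖G z‖ ≤ M := by
    intro z h1 h2
    refine (hbound z h1 ?_).trans hCM
    intro hmem
    rw [Set.mem_iUnion] at hmem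
    obtain ⟨n, hn⟩ := hmem
    rw [Metric.mem_ball] at hn
    exact absurd (h2 n) (not_le.mpr hn)
  -- strip subset facts for closed balls
  have hsub : ∀ n : ℤ, Metric.closedBall ((n : ℂ) * Real.pi) (1/2) ⊆ U :=
    fun n w hw => hUsub (ball_im hw)
  have hcl : ∀ n : ℤ, closure (Metric.ball ((n : ℂ) * Real.pi) (1/2)) =
      Metric.closedBall ((n : ℂ) * Real.pi) (1/2) := fun n => closure_ball _ hhalf
  -- Part 1 key: ‖G z‖ ≤ M on the strip
  have keyG : ∀ z : ℂ, |z.im| ≤ 1 → ‖G z‖ ≤ M := by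
    intro z hz1
    by_cases hc : ∃ n : ℤ, z ∈ Metric.closedBall ((n : ℂ) * Real.pi) (1/2)
    · obtain ⟨n, hzn⟩ := hc
      have hdc : DiffContOnCl ℂ G (Metric.ball ((n : ℂ) * Real.pi) (1/2)) :=
        DifferentiableOn.diffContOnCl (by rw [hcl n]; exact hGdiff.mono (hsub n))
      refine Complex.norm_le_of_forall_mem_frontier_norm_le Metric.isBounded_ball hdc ?_
        (by rw [hcl n]; exact hzn)
      intro w hw
      rw [frontier_ball _ hhalf, Metric.mem_sphere] at hw
      have him : |w.im| ≤ 1 := ball_im (Metric.mem_closedBall.mpr hw.le)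
      exact hb' w him (sphere_off hw)
    · push_neg at hc
      refine hb' z hz1 fun n => ?_
      have := hc n
      rw [Metric.mem_closedBall, not_le] at this
      exact this.le
  have h2p : (1:ℝ) ≤ 2 ^ p := one_le_pow₀ (by norm_num)
  refine ⟨⟨M, fun z hz => (keyG z hz).trans (by nlinarith)⟩, ⟨8^p * M, ?_⟩⟩
  -- off-ball bound on F
  have hFoff : ∀ w : ℂ, |w.im| ≤ 1 → (∀ n : ℤ, (1:ℝ)/2 ≤ dist w ((n : ℂ) * Real.pi)) →
      ‖F w‖ ≤ M * (4 * (1 + ‖w‖))^p := by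
    intro w h1 h2
    have hs := sinc_lower h1 h2
    have hGw := hb' w h1 h2
    have hnorm : ‖G w‖ = ‖F w‖ * ‖sinc w‖ ^ p := by
      simp [hGdef, norm_mul, norm_pow]
    set B := 4 * (1 + ‖w‖) with hB
    have hBpos : (0:ℝ) < B := by positivity
    have hBp : (0:ℝ) < B ^ p := pow_pos hBpos p
    have hinv : (B⁻¹)^p ≤ ‖sinc w‖ ^ p :=
      pow_le_pow_left₀ (by positivity) hs p
    have h3 : ‖F w‖ * (B⁻¹)^p ≤ M := by
      calc ‖F w‖ * (B⁻¹)^p ≤ ‖F w‖ * ‖sinc w‖^p :=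
            mul_le_mul_of_nonneg_left hinv (norm_nonneg _)
        _ = ‖G w‖ := hnorm.symm
        _ ≤ M := hGw
    calc ‖F w‖ = ‖F w‖ * ((B^p)⁻¹ * B^p) := by
          rw [inv_mul_cancel₀ hBp.ne', mul_one]
      _ = (‖F w‖ * (B⁻¹)^p) * B^p := by rw [inv_pow]; ring
      _ ≤ M * B^p := mul_le_mul_of_nonneg_right h3 hBp.le
  intro z hz1
  have habz : (0:ℝ) ≤ ‖z‖ := norm_nonneg z
  have hgoal8 : M * (8 * (1 + ‖z‖))^p = 8^p * M * (1 + ‖z‖)^p := by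
    rw [mul_pow]; ring
  by_cases hc : ∃ n : ℤ, z ∈ Metric.closedBall ((n : ℂ) * Real.pi) (1/2)
  · obtain ⟨n, hzn⟩ := hc
    have hdc : DiffContOnCl ℂ F (Metric.ball ((n : ℂ) * Real.pi) (1/2)) :=
      DifferentiableOn.diffContOnCl (by rw [hcl n]; exact hFdiff.mono (hsub n))
    have hmain : ‖F z‖ ≤ M * (8 * (1 + ‖z‖))^p := by
      refine Complex.norm_le_of_forall_mem_frontier_norm_le Metric.isBounded_ball hdc ?_
        (by rw [hcl n]; exact hzn)
      intro w hw
      rw [frontier_ball _ hhalf, Metric.mem_sphere] at hw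
      have him : |w.im| ≤ 1 := ball_im (Metric.mem_closedBall.mpr hw.le)
      have h1 := hFoff w him (sphere_off hw)
      have hdzw : dist w z ≤ 1 := by
        have ht := dist_triangle w ((n : ℂ) * Real.pi) z
        rw [Metric.mem_closedBall] at hzn
        rw [dist_comm ((n : ℂ) * Real.pi) z] at ht
        linarith [hzn, hw.le, ht]
      have habw : ‖w‖ ≤ ‖z‖ + 1 := by
        have := abs_dist_sub_le w z 0
        simp only [dist_zero_right] at this
        have h' := abs_le.mp this
        linarith [h'.1, h'.2]
      have hle : (4 * (1 + ‖w‖))^p ≤ (8 * (1 + ‖z‖))^p := by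
        apply pow_le_pow_left₀ (by positivity)
        linarith
      calc ‖F w‖ ≤ M * (4 * (1 + ‖w‖))^p := h1
        _ ≤ M * (8 * (1 + ‖z‖))^p := mul_le_mul_of_nonneg_left hle hM0
    calc ‖F z‖ ≤ M * (8 * (1 + ‖z‖))^p := hmain
      _ = 8^p * M * (1 + ‖z‖)^p := hgoal8
  · push_neg at hc
    have hz2 : ∀ n : ℤ, (1:ℝ)/2 ≤ dist z ((n : ℂ) * Real.pi) := by
      intro n
      have := hc n
      rw [Metric.mem_closedBall, not_le] at this
      exact this.le
    have h1 := hFoff z hz1 hz2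
    have hle : (4 * (1 + ‖z‖))^p ≤ (8 * (1 + ‖z‖))^p := by
      apply pow_le_pow_left₀ (by positivity)
      linarith
    calc ‖F z‖ ≤ M * (4 * (1 + ‖z‖))^p := h1
      _ ≤ M * (8 * (1 + ‖z‖))^p := mul_le_mul_of_nonneg_left hle hM0
      _ = 8^p * M * (1 + ‖z‖)^p := hgoal8


end
end

section
/- Let f be entire on ℂ, |f(z)| ≤ C₀ e^{σ|z|}, with f bounded on ℝ. If λ ∈ ℝ with |λ| > σ, then lim_{T→∞} (2T)^{-1} ∫_{-T}^{T} f(x) e^{-iλx} dx = 0. -/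
open MeasureTheory Filter intervalIntegral
open Set Complex

lemma bohr_aux_bigO {g : ℂ → ℂ} {C₀ B : ℝ} (l : Filter ℂ)
    (h : ∀ z, ‖g z‖ ≤ C₀ * Real.exp (B * ‖z‖)) :
    ∃ c < (2:ℝ), ∃ B', g =O[l] fun z => Real.exp (B' * ‖z‖ ^ (c:ℝ)) := by
  refine ⟨1, by norm_num, B, Asymptotics.IsBigO.of_bound C₀ (Eventually.of_forall fun z => ?_)⟩
  rw [Real.rpow_one, Real.norm_eq_abs, _root_.abs_of_nonneg (Real.exp_pos _).le]
  exact h z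

lemma bohr_strip (f : ℂ → ℂ) (C₀ σ M : ℝ) (hf : Differentiable ℂ f)
    (hbound : ∀ z, ‖f z‖ ≤ C₀ * Real.exp (σ * ‖z‖))
    (hM : ∀ t : ℝ, ‖f t‖ ≤ M) (z : ℂ) :
    ‖f z‖ ≤ max M C₀ * Real.exp (σ * |z.im|) := by
  set K := max M C₀ with hK
  have hC₀ : 0 ≤ C₀ := le_trans (norm_nonneg (f 0)) (by simpa using hbound 0)
  rcases le_or_gt 0 z.im with him | him
  · -- upper half plane, g w = f w * exp (I σ w)
    set g := fun w : ℂ => f w * Complex.exp (I * σ * w) with hg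
    have hgd : Differentiable ℂ g := hf.mul (by fun_prop)
    have hre : ∀ w : ℂ, (I * (σ:ℂ) * w).re = -(σ * w.im) := by
      intro w; simp [Complex.mul_re, Complex.mul_im]
    have hgnorm : ∀ w, ‖g w‖ = ‖f w‖ * Real.exp (-(σ * w.im)) := by
      intro w
      rw [hg]; simp only [norm_mul, Complex.norm_exp, hre]
    have hgrow : ∀ w, ‖g w‖ ≤ C₀ * Real.exp ((2*|σ|) * ‖w‖) := by
      intro w
      rw [hgnorm]
      calc ‖f w‖ * Real.exp (-(σ * w.im))
          ≤ (C₀ * Real.exp (σ * ‖w‖)) * Real.exp (-(σ * w.im)) := by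
            gcongr; exact hbound _
        _ ≤ C₀ * Real.exp ((2*|σ|) * ‖w‖) := by
            rw [mul_assoc, ← Real.exp_add]
            gcongr
            have h1 : σ * ‖w‖ ≤ |σ| * ‖w‖ :=
              mul_le_mul_of_nonneg_right (le_abs_self σ) (norm_nonneg w)
            have h2 : -(σ * w.im) ≤ |σ| * ‖w‖ := by
              calc -(σ * w.im) ≤ |σ * w.im| := neg_le_abs _
                _ = |σ| * |w.im| := abs_mul _ _
                _ ≤ |σ| * ‖w‖ := by gcongr; exact Complex.abs_im_le_norm w
            nlinarith
    have hbd_re : ∀ x : ℝ, ‖g (x:ℂ)‖ ≤ K := by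
      intro x
      rw [hgnorm]; simp only [Complex.ofReal_im, mul_zero, neg_zero, Real.exp_zero, mul_one]
      exact (hM x).trans (le_max_left _ _)
    have hbd_im_pos : ∀ x : ℝ, 0 ≤ x → ‖g ((x:ℂ) * I)‖ ≤ K := by
      intro x hx
      rw [hgnorm]
      have : ((x:ℂ) * I).im = x := by simp
      rw [this]
      calc ‖f ((x:ℂ)*I)‖ * Real.exp (-(σ * x))
          ≤ (C₀ * Real.exp (σ * ‖(x:ℂ)*I‖)) * Real.exp (-(σ*x)) := by
            gcongr; exact hbound _
        _ = C₀ := by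
            rw [mul_assoc, ← Real.exp_add]
            have : ‖(x:ℂ)*I‖ = x := by
              simp [_root_.abs_of_nonneg hx]
            rw [this]
            simp
        _ ≤ K := le_max_right _ _
    have key : ‖g z‖ ≤ K := by
      rcases le_or_gt 0 z.re with hzre | hzre
      · exact PhragmenLindelof.quadrant_I (hgd.diffContOnCl)
          (bohr_aux_bigO _ hgrow) (fun x hx => hbd_re x) hbd_im_pos hzre him
      · exact PhragmenLindelof.quadrant_II (hgd.diffContOnCl)
          (bohr_aux_bigO _ hgrow) (fun x hx => hbd_re x) hbd_im_pos hzre.le him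
    have : ‖f z‖ = ‖g z‖ * Real.exp (σ * z.im) := by
      rw [hgnorm, mul_assoc, ← Real.exp_add, neg_add_cancel, Real.exp_zero, mul_one]
    rw [this, _root_.abs_of_nonneg him]
    gcongr
  · -- lower half plane, g w = f w * exp (-(I σ w))
    set g := fun w : ℂ => f w * Complex.exp (-(I * σ * w)) with hg
    have hgd : Differentiable ℂ g := hf.mul (by fun_prop)
    have hre : ∀ w : ℂ, (-(I * (σ:ℂ) * w)).re = σ * w.im := by
      intro w; simp [Complex.mul_re, Complex.mul_im]
    have hgnorm : ∀ w, ‖g w‖ = ‖f w‖ * Real.exp (σ * w.im) := by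
      intro w
      rw [hg]; simp only [norm_mul, Complex.norm_exp, hre]
    have hgrow : ∀ w, ‖g w‖ ≤ C₀ * Real.exp ((2*|σ|) * ‖w‖) := by
      intro w
      rw [hgnorm]
      calc ‖f w‖ * Real.exp (σ * w.im)
          ≤ (C₀ * Real.exp (σ * ‖w‖)) * Real.exp (σ * w.im) := by
            gcongr; exact hbound _
        _ ≤ C₀ * Real.exp ((2*|σ|) * ‖w‖) := by
            rw [mul_assoc, ← Real.exp_add]
            gcongr
            have h1 : σ * ‖w‖ ≤ |σ| * ‖w‖ :=
              mul_le_mul_of_nonneg_right (le_abs_self σ) (norm_nonneg w)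
            have h2 : σ * w.im ≤ |σ| * ‖w‖ := by
              calc σ * w.im ≤ |σ * w.im| := le_abs_self _
                _ = |σ| * |w.im| := abs_mul _ _
                _ ≤ |σ| * ‖w‖ := by gcongr; exact Complex.abs_im_le_norm w
            nlinarith
    have hbd_re : ∀ x : ℝ, ‖g (x:ℂ)‖ ≤ K := by
      intro x
      rw [hgnorm]; simp only [Complex.ofReal_im, mul_zero, Real.exp_zero, mul_one]
      exact (hM x).trans (le_max_left _ _)
    have hbd_im_neg : ∀ x : ℝ, x ≤ 0 → ‖g ((x:ℂ) * I)‖ ≤ K := by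
      intro x hx
      rw [hgnorm]
      have : ((x:ℂ) * I).im = x := by simp
      rw [this]
      calc ‖f ((x:ℂ)*I)‖ * Real.exp (σ * x)
          ≤ (C₀ * Real.exp (σ * ‖(x:ℂ)*I‖)) * Real.exp (σ*x) := by
            gcongr; exact hbound _
        _ = C₀ * Real.exp (σ * |x| + σ * x) := by
            rw [mul_assoc, ← Real.exp_add]
            have : ‖(x:ℂ)*I‖ = |x| := by simp
            rw [this]
        _ = C₀ := by rw [_root_.abs_of_nonpos hx]; ring_nf; simp
        _ ≤ K := le_max_right _ _
    have key : ‖g z‖ ≤ K := by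
      rcases le_or_gt 0 z.re with hzre | hzre
      · exact PhragmenLindelof.quadrant_IV (hgd.diffContOnCl)
          (bohr_aux_bigO _ hgrow) (fun x hx => hbd_re x) hbd_im_neg hzre him.le
      · exact PhragmenLindelof.quadrant_III (hgd.diffContOnCl)
          (bohr_aux_bigO _ hgrow) (fun x hx => hbd_re x) hbd_im_neg hzre.le him.le
    have : ‖f z‖ = ‖g z‖ * Real.exp (-(σ * z.im)) := by
      rw [hgnorm, mul_assoc, ← Real.exp_add, add_neg_cancel, Real.exp_zero, mul_one]
    rw [this, _root_.abs_of_nonpos him.le]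
    have : -(σ * z.im) = σ * -z.im := by ring
    rw [this]
    gcongr

noncomputable section

/-- one-variable Bohr theorem: the mean Fourier coefficient of a
bounded entire function of exponential type σ vanishes at frequencies |λ| > σ. -/
theorem bohr_one_variable (f : ℂ → ℂ) (C₀ σ : ℝ)
    (hf : Differentiable ℂ f)
    (hbound : ∀ z, ‖f z‖ ≤ C₀ * Real.exp (σ * ‖z‖))
    (hbdd : ∃ M : ℝ, ∀ t : ℝ, ‖f t‖ ≤ M)
    (lam : ℝ) (hlam : |lam| > σ) :
    Tendsto (fun T : ℝ => (2*T : ℂ)⁻¹ *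
        ∫ x in (-T)..T, f x * Complex.exp (-Complex.I * lam * x))
      atTop (nhds 0) := by
  obtain ⟨M, hM⟩ := hbdd
  set K := max M C₀ with hKdef
  have hK0 : 0 ≤ K := le_trans (le_trans (norm_nonneg (f 0)) (by simpa using hM 0))
    (le_max_left _ _)
  set g := fun z : ℂ => f z * Complex.exp (-Complex.I * lam * z) with hgdef
  have hgd : Differentiable ℂ g := hf.mul (by fun_prop)
  have hgre : ∀ w : ℂ, (-I * (lam:ℂ) * w).re = lam * w.im := by
    intro w; simp [Complex.mul_re, Complex.mul_im]
  have hgnorm : ∀ w, ‖g w‖ = ‖f w‖ * Real.exp (lam * w.im) := by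
    intro w
    rw [hgdef]
    simp only [norm_mul, Complex.norm_exp, hgre]
  have hstrip : ∀ w : ℂ, ‖f w‖ ≤ K * Real.exp (σ * |w.im|) :=
    bohr_strip f C₀ σ M hf hbound hM
  -- contour shift identity
  have contour : ∀ (T y : ℝ),
      (∫ x in (-T)..T, g x) = (∫ x in (-T)..T, g (x + y*I))
        - I • (∫ t in (0:ℝ)..y, g (T + t*I)) + I • (∫ t in (0:ℝ)..y, g (-T + t*I)) := by
    intro T y
    have h0 := Complex.integral_boundary_rect_eq_zero_of_differentiableOn g
      ((-T : ℝ) : ℂ) (((T:ℝ) : ℂ) + y*I) (hgd.differentiableOn)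
    have e1 : ((((-T) : ℝ) : ℂ)).re = -T := Complex.ofReal_re _
    have e2 : ((((-T) : ℝ) : ℂ)).im = 0 := Complex.ofReal_im _
    have e3 : (((T:ℝ):ℂ) + (y:ℂ)*I).re = T := by simp
    have e4 : (((T:ℝ):ℂ) + (y:ℂ)*I).im = y := by simp
    rw [e1, e2, e3, e4] at h0
    simp only [Complex.ofReal_zero, zero_mul, add_zero, Complex.ofReal_neg] at h0
    have hsm : ∀ v : ℂ, I • v = I * v := fun v => rfl
    rw [hsm, hsm] at h0
    rw [hsm, hsm]
    linear_combination h0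
  rw [NormedAddCommGroup.tendsto_nhds_zero]
  intro ε hε
  have hc : σ - |lam| < 0 := by linarith
  have h1 : Tendsto (fun s : ℝ => K * Real.exp ((σ - |lam|) * s)) atTop (nhds 0) := by
    have hb : Tendsto (fun s : ℝ => (σ - |lam|) * s) atTop atBot :=
      (tendsto_const_mul_atBot_of_neg hc).2 tendsto_id
    simpa using (Real.tendsto_exp_atBot.comp hb).const_mul K
  obtain ⟨s, hsε, hs0⟩ :=
    ((h1.eventually_lt_const (by linarith : (0:ℝ) < ε/2)).and (eventually_ge_atTop 0)).exists
  set y := if 0 ≤ lam then -s else s with hydef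
  have hy_abs : |y| = s := by
    rw [hydef]; split_ifs <;> simp [_root_.abs_of_nonneg hs0]
  have hy_mul : lam * y = -(|lam| * s) := by
    rw [hydef]; split_ifs with h
    · rw [_root_.abs_of_nonneg h]; ring
    · rw [_root_.abs_of_neg (lt_of_not_ge h)]; ring
  set A := K * Real.exp ((σ - |lam|) * s) with hAdef
  set B1 := K * Real.exp ((|σ| + |lam|) * s) with hBdef
  have hB1 : 0 ≤ B1 := by positivity
  -- horizontal estimate
  have horiz : ∀ T : ℝ, ‖∫ x in (-T)..T, g (x + y*I)‖ ≤ A * |T - (-T)| := by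
    intro T
    apply intervalIntegral.norm_integral_le_of_norm_le_const
    intro x hx
    rw [hgnorm]
    have him : ((x:ℂ) + (y:ℂ)*I).im = y := by simp
    rw [him, hy_mul]
    calc ‖f ((x:ℂ) + y*I)‖ * Real.exp (-(|lam| * s))
        ≤ (K * Real.exp (σ * |((x:ℂ) + (y:ℂ)*I).im|)) * Real.exp (-(|lam| * s)) := by
          gcongr; exact hstrip _
      _ = A := by
          rw [him, hy_abs, hAdef, mul_assoc, ← Real.exp_add]
          ring_nf
  -- side estimates
  have side : ∀ a : ℝ, ‖∫ t in (0:ℝ)..y, g ((a:ℂ) + t*I)‖ ≤ B1 * s := by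
    intro a
    have := intervalIntegral.norm_integral_le_of_norm_le_const (C := B1)
      (f := fun t : ℝ => g ((a:ℂ) + t*I)) (a := 0) (b := y) ?_
    · calc ‖∫ t in (0:ℝ)..y, g ((a:ℂ) + t*I)‖ ≤ B1 * |y - 0| := this
        _ = B1 * s := by rw [sub_zero, hy_abs]
    · intro t ht
      have habs : |t| ≤ s := by
        rw [Set.mem_uIoc] at ht
        rw [← hy_abs]
        rcases ht with ⟨h1, h2⟩ | ⟨h1, h2⟩
        · exact abs_le.mpr ⟨by linarith [neg_abs_le y, le_abs_self y], by
            linarith [le_abs_self y]⟩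
        · exact abs_le.mpr ⟨by linarith [neg_abs_le y], by
            linarith [le_abs_self y, neg_abs_le y]⟩
      rw [hgnorm]
      have him : ((a:ℂ) + (t:ℂ)*I).im = t := by simp
      rw [him]
      calc ‖f ((a:ℂ) + t*I)‖ * Real.exp (lam * t)
          ≤ (K * Real.exp (σ * |((a:ℂ) + (t:ℂ)*I).im|)) * Real.exp (lam * t) := by
            gcongr; exact hstrip _
        _ ≤ B1 := by
            rw [him, hBdef, mul_assoc, ← Real.exp_add]
            gcongr
            have i1 : σ * |t| ≤ |σ| * s :=
              le_trans (mul_le_mul_of_nonneg_right (le_abs_self σ) (abs_nonneg t))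
                (mul_le_mul_of_nonneg_left habs (abs_nonneg σ))
            have i2 : lam * t ≤ |lam| * s := by
              calc lam * t ≤ |lam * t| := le_abs_self _
                _ = |lam| * |t| := abs_mul _ _
                _ ≤ |lam| * s := mul_le_mul_of_nonneg_left habs (abs_nonneg lam)
            nlinarith
  have h2 : Tendsto (fun T : ℝ => (2 * (B1 * s)) / (2 * T)) atTop (nhds 0) :=
    tendsto_const_nhds.div_atTop ((tendsto_const_mul_atTop_of_pos two_pos).2 tendsto_id)
  filter_upwards [eventually_gt_atTop 0,
    h2.eventually_lt_const (by linarith : (0:ℝ) < ε/2)] with T hT hT2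
  have hgx : ∀ x : ℝ, f x * Complex.exp (-Complex.I * lam * x) = g x := fun x => rfl
  have hnorm2T : ‖(2 * (T:ℂ))⁻¹‖ = (2*T)⁻¹ := by
    rw [norm_inv, norm_mul, Complex.norm_real, Real.norm_of_nonneg hT.le]
    norm_num
  have main_bound : ‖∫ x in (-T)..T, g x‖ ≤ A * (2*T) + 2 * (B1 * s) := by
    rw [contour T y]
    refine le_trans (norm_add_le _ _) (le_trans (add_le_add_left (norm_sub_le _ _) _) ?_)
    rw [norm_smul, norm_smul, Complex.norm_I, one_mul, one_mul]
    have h3 := side (-T)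
    rw [Complex.ofReal_neg] at h3
    have hh := add_le_add (add_le_add (horiz T) (side T)) h3
    refine le_trans hh (le_of_eq ?_)
    rw [show T - (-T) = 2*T by ring, _root_.abs_of_nonneg (by linarith : (0:ℝ) ≤ 2*T)]
    ring
  have hA0 : 0 ≤ A := by positivity
  calc ‖(2*(T:ℂ))⁻¹ * ∫ x in (-T)..T, f x * Complex.exp (-Complex.I * lam * x)‖
      = (2*T)⁻¹ * ‖∫ x in (-T)..T, g x‖ := by
        rw [norm_mul, hnorm2T]
    _ ≤ (2*T)⁻¹ * (A * (2*T) + 2 * (B1 * s)) := by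
        gcongr
    _ = A + (2 * (B1 * s)) / (2 * T) := by
        field_simp
    _ < ε/2 + ε/2 := by
        apply add_lt_add hsε hT2
    _ = ε := by ring

end
end
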